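/- If F and G are first-order sentences without equality such that F ⊨ G, then there exists an interpolant lifting base ⟨F, G, 𝔽, 𝔾, H_grd, F_exp, G_exp, θ⟩ whose first two components are F and G. -/

import Mathlib

open Classical

namespace CTIF

/-- First-order terms: variables and applications of function symbols
(a function symbol is a natural number used with an arity). -/
inductive Tm : Type where
  | var : ℕ → Tm
  | app : ℕ → (n : ℕ) → (Fin n → Tm) → Tm

/-- First-order formulas without equality. -/
inductive Fml : Type where
  | tru : Fml
  | fls : Fml
  | atom : ℕ → (n : ℕ) → (Fin n → Tm) → Fml
  | neg : Fml → Fml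
  | conj : Fml → Fml → Fml
  | disj : Fml → Fml → Fml
  | all : ℕ → Fml → Fml
  | exi : ℕ → Fml → Fml

/-- A structure: interpretation of all function and predicate symbols (at every arity). -/
structure Struc (D : Type) : Type where
  fn : ℕ → (n : ℕ) → (Fin n → D) → D
  pr : ℕ → (n : ℕ) → (Fin n → D) → Prop

def Tm.eval {D : Type} (M : Struc D) (a : ℕ → D) : Tm → D
  | .var x => a x
  | .app f n ts => M.fn f n (fun i => (ts i).eval M a)

def Fml.sat {D : Type} : Fml → Struc D → (ℕ → D) → Prop
  | .tru, _, _ => True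
  | .fls, _, _ => False
  | .atom p n ts, M, a => M.pr p n (fun i => (ts i).eval M a)
  | .neg F, M, a => ¬ F.sat M a
  | .conj F G, M, a => F.sat M a ∧ G.sat M a
  | .disj F G, M, a => F.sat M a ∨ G.sat M a
  | .all x F, M, a => ∀ d, F.sat M (Function.update a x d)
  | .exi x F, M, a => ∃ d, F.sat M (Function.update a x d)

/-- Entailment: every model (with any variable assignment) of `F` satisfies `G`. -/
def entails (F G : Fml) : Prop :=
  ∀ (D : Type), Nonempty D → ∀ (M : Struc D) (a : ℕ → D), F.sat M a → G.sat M a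

def Tm.vars : Tm → Set ℕ
  | .var x => {x}
  | .app _ _ ts => ⋃ i, (ts i).vars

/-- Function symbols (with their arity) occurring in a term. -/
def Tm.funs : Tm → Set (ℕ × ℕ)
  | .var _ => ∅
  | .app f n ts => insert (f, n) (⋃ i, (ts i).funs)

def Tm.isGround (t : Tm) : Prop := t.vars = ∅

/-- `t` is a ground term all of whose function symbols come from `S`. -/
def Tm.builtFrom (S : Set (ℕ × ℕ)) : Tm → Prop
  | .var _ => False
  | .app f n ts => (f, n) ∈ S ∧ ∀ i, Tm.builtFrom S (ts i)

/-- `t` occurs (as a subterm) in the given term. -/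
def Tm.occursIn (t : Tm) : Tm → Prop
  | .var x => t = Tm.var x
  | .app f n ts => t = Tm.app f n ts ∨ ∃ i, Tm.occursIn t (ts i)

/-- `s` is a strict subterm of `t`. -/
def Tm.strictSub (s t : Tm) : Prop := s ≠ t ∧ s.occursIn t

def Fml.funs : Fml → Set (ℕ × ℕ)
  | .tru => ∅
  | .fls => ∅
  | .atom _ _ ts => ⋃ i, (ts i).funs
  | .neg F => F.funs
  | .conj F G => F.funs ∪ G.funs
  | .disj F G => F.funs ∪ G.funs
  | .all _ F => F.funs
  | .exi _ F => F.funs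

/-- Predicate symbols with the polarity (`true` = positive) of their occurrences;
the second argument is the polarity of the context. -/
def Fml.preds : Fml → Bool → Set (ℕ × Bool)
  | .tru, _ => ∅
  | .fls, _ => ∅
  | .atom p _ _, pol => {(p, pol)}
  | .neg F, pol => F.preds (!pol)
  | .conj F G, pol => F.preds pol ∪ G.preds pol
  | .disj F G, pol => F.preds pol ∪ G.preds pol
  | .all _ F, pol => F.preds pol
  | .exi _ F, pol => F.preds pol

/-- pred(F): predicates paired with the polarities of their occurrences in `F`. -/
def Fml.pred (F : Fml) : Set (ℕ × Bool) := F.preds true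

/-- Predicate symbols occurring in a formula (disregarding polarity). -/
def Fml.predSyms : Fml → Set ℕ
  | .tru => ∅
  | .fls => ∅
  | .atom p _ _ => {p}
  | .neg F => F.predSyms
  | .conj F G => F.predSyms ∪ G.predSyms
  | .disj F G => F.predSyms ∪ G.predSyms
  | .all _ F => F.predSyms
  | .exi _ F => F.predSyms

def Fml.free : Fml → Set ℕ
  | .tru => ∅
  | .fls => ∅
  | .atom _ _ ts => ⋃ i, (ts i).vars
  | .neg F => F.free
  | .conj F G => F.free ∪ G.free
  | .disj F G => F.free ∪ G.free
  | .all x F => F.free \ {x}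
  | .exi x F => F.free \ {x}

/-- Variables occurring bound (i.e. quantified upon) in a formula. -/
def Fml.bound : Fml → Set ℕ
  | .tru => ∅
  | .fls => ∅
  | .atom _ _ _ => ∅
  | .neg F => F.bound
  | .conj F G => F.bound ∪ G.bound
  | .disj F G => F.bound ∪ G.bound
  | .all x F => insert x F.bound
  | .exi x F => insert x F.bound

def Fml.isQF : Fml → Prop
  | .tru => True
  | .fls => True
  | .atom _ _ _ => True
  | .neg F => F.isQF
  | .conj F G => F.isQF ∧ G.isQF
  | .disj F G => F.isQF ∧ G.isQF
  | .all _ _ => False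
  | .exi _ _ => False

def Fml.isGround (F : Fml) : Prop := F.isQF ∧ F.free = ∅

def Fml.isSentence (F : Fml) : Prop := F.free = ∅

/-- Substitutions: mappings from variables to terms. -/
abbrev Subst := ℕ → Tm

def Subst.dom (σ : Subst) : Set ℕ := {x | σ x ≠ Tm.var x}

def Subst.rng (σ : Subst) : Set Tm := {t | ∃ x ∈ σ.dom, σ x = t}

def Subst.isGround (σ : Subst) : Prop := ∀ x ∈ σ.dom, (σ x).isGround

/-- Injective substitution: distinct domain variables are mapped to distinct terms. -/
def Subst.inj (σ : Subst) : Prop := ∀ x ∈ σ.dom, ∀ y ∈ σ.dom, σ x = σ y → x = y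

def Tm.subst (σ : Subst) : Tm → Tm
  | .var x => σ x
  | .app f n ts => .app f n (fun i => (ts i).subst σ)

/-- Substitution application to formulas (free occurrences of variables are replaced). -/
def Fml.subst (σ : Subst) : Fml → Fml
  | .tru => .tru
  | .fls => .fls
  | .atom p n ts => .atom p n (fun i => (ts i).subst σ)
  | .neg F => .neg (F.subst σ)
  | .conj F G => .conj (F.subst σ) (G.subst σ)
  | .disj F G => .disj (F.subst σ) (G.subst σ)
  | .all x F => .all x (F.subst (Function.update σ x (Tm.var x)))
  | .exi x F => .exi x (F.subst (Function.update σ x (Tm.var x)))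

/-- Inverse application of an injective substitution to a term:
all rng(σ)-maximal occurrences of terms in the range of σ are replaced by
the corresponding domain variable. -/
noncomputable def Tm.inv (σ : Subst) : Tm → Tm
  | .var x =>
      if h : ∃ v ∈ Subst.dom σ, σ v = Tm.var x then Tm.var h.choose else Tm.var x
  | .app f n ts =>
      if h : ∃ v ∈ Subst.dom σ, σ v = Tm.app f n ts then Tm.var h.choose
      else .app f n (fun i => Tm.inv σ (ts i))

/-- Inverse application of an injective substitution to a formula. -/
noncomputable def Fml.inv (σ : Subst) : Fml → Fml
  | .tru => .tru
  | .fls => .fls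
  | .atom p n ts => .atom p n (fun i => Tm.inv σ (ts i))
  | .neg F => .neg (F.inv σ)
  | .conj F G => .conj (F.inv σ) (G.inv σ)
  | .disj F G => .disj (F.inv σ) (G.inv σ)
  | .all x F => .all x (F.inv σ)
  | .exi x F => .exi x (F.inv σ)

/-- `H` is a Craig-Lyndon interpolant of `F` and `G`. -/
def CLInterp (F G H : Fml) : Prop :=
  entails F H ∧ entails H G ∧
  H.pred ⊆ F.pred ∩ G.pred ∧
  H.funs ⊆ F.funs ∩ G.funs ∧
  H.free ⊆ F.free ∩ G.free

/-- `H` is a Craig interpolant of `F` and `G` (no polarity constraint). -/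
def CraigInterp (F G H : Fml) : Prop :=
  entails F H ∧ entails H G ∧
  H.predSyms ⊆ F.predSyms ∩ G.predSyms ∧
  H.funs ⊆ F.funs ∩ G.funs ∧
  H.free ⊆ F.free ∩ G.free

/-- An S-term: a term whose outermost function symbol is in `S`. -/
def isSTerm (S : Set (ℕ × ℕ)) : Tm → Prop
  | .var _ => False
  | .app f n _ => (f, n) ∈ S

def STerms (S : Set (ℕ × ℕ)) : Set Tm := {t | isSTerm S t}

/-- `t` has a `T`-maximal occurrence in the given term: an occurrence that is
not within an occurrence of another member of `T`. -/
def Tm.hasMaxOcc (T : Set Tm) (t : Tm) : Tm → Prop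
  | .var x => Tm.var x ∈ T ∧ t = Tm.var x
  | .app f n ts =>
      (Tm.app f n ts ∈ T ∧ t = Tm.app f n ts) ∨
      (Tm.app f n ts ∉ T ∧ ∃ i, Tm.hasMaxOcc T t (ts i))

/-- `t` has a `T`-maximal occurrence in the formula. -/
def Fml.hasMaxOcc (T : Set Tm) (t : Tm) : Fml → Prop
  | .tru => False
  | .fls => False
  | .atom _ _ ts => ∃ i, Tm.hasMaxOcc T t (ts i)
  | .neg F => F.hasMaxOcc T t
  | .conj F G => F.hasMaxOcc T t ∨ G.hasMaxOcc T t
  | .disj F G => F.hasMaxOcc T t ∨ G.hasMaxOcc T t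
  | .all _ F => F.hasMaxOcc T t
  | .exi _ F => F.hasMaxOcc T t

/-- Universal quantification over a list of variables. -/
def alls (xs : List ℕ) (F : Fml) : Fml := xs.foldr Fml.all F

end CTIF
namespace CTIF

/-- `M'` agrees with `M` except possibly in the interpretation of the function
symbols (with arity) in `S`. -/
def agreeExcept {D : Type} (M M' : Struc D) (S : Set (ℕ × ℕ)) : Prop :=
  M'.pr = M.pr ∧ ∀ g n, (g, n) ∉ S → M'.fn g n = M.fn g n

/-- Interpolant lifting base ⟨F, G, 𝔽, 𝔾, H_grd, F_exp, G_exp, θ⟩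
(Definition of "interpolant lifting base"). -/
def IsLiftBase (F G : Fml) (FS GS : Set (ℕ × ℕ)) (Hg Fe Ge : Fml) (θ : Subst) : Prop :=
  F.isSentence ∧ G.isSentence ∧
  FS ∩ GS = ∅ ∧
  Hg.isGround ∧ Fe.isQF ∧ Ge.isQF ∧ Subst.isGround θ ∧
  -- (i)  F ⊨ ∃𝔽 ∀u F_exp, semantically via expansions:
  (∀ (D : Type), Nonempty D → ∀ M : Struc D, (∀ a, F.sat M a) →
    ∃ M' : Struc D, agreeExcept M M' FS ∧ ∀ a, Fe.sat M' a) ∧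
  -- (i') ∀𝔾 ∃v G_exp ⊨ G, semantically via reinterpretations:
  (∀ (D : Type), Nonempty D → ∀ M : Struc D,
    (∀ M' : Struc D, agreeExcept M M' GS → ∃ a, Ge.sat M' a) → ∀ a, G.sat M a) ∧
  -- (ii), (ii')
  Fe.pred ⊆ F.pred ∧ Ge.pred ⊆ G.pred ∧
  -- (iii), (iii')
  Fe.funs ⊆ (F.funs ∩ G.funs) ∪ FS ∧ Ge.funs ⊆ (F.funs ∩ G.funs) ∪ GS ∧
  -- (iv), (iv')
  F.funs ∩ GS = ∅ ∧ G.funs ∩ FS = ∅ ∧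
  -- (v)
  Subst.dom θ = Fe.free ∪ Ge.free ∧
  -- (vi)
  (∃ c₀ : ℕ, (c₀, 0) ∈ FS ∪ GS ∧
    ∀ x ∈ Subst.dom θ, (θ x).funs ⊆ Fe.funs ∪ Ge.funs ∪ {(c₀, 0)}) ∧
  -- (vii)
  CLInterp (Fe.subst θ) (Ge.subst θ) Hg

/-- The lifted formula Q₁v₁ … Qₙvₙ body, where Qᵢ = ∃ if tᵢ is an 𝔽-term
(its outermost symbol is in `FS`) and Qᵢ = ∀ otherwise. -/
noncomputable def lifted (n : ℕ) (v : Fin n → ℕ) (tl : Fin n → Tm)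
    (FS : Set (ℕ × ℕ)) (body : Fml) : Fml :=
  (List.finRange n).foldr
    (fun i acc => if isSTerm FS (tl i) then Fml.exi (v i) acc else Fml.all (v i) acc)
    body

end CTIF
namespace CTIF
open Classical

/-! ### Module 1: basic lemmas about evaluation, substitution, coincidence -/

theorem tm_eval_subst {D : Type} (M : Struc D) (a : ℕ → D) (σ : Subst) (t : Tm) :
    Tm.eval M a (t.subst σ) = Tm.eval M (fun x => Tm.eval M a (σ x)) t := by
  induction t with
  | var x => rfl
  | app f n ts ih => simp only [Tm.subst, Tm.eval, ih]

theorem sat_subst_qf {D : Type} (M : Struc D) (σ : Subst) (φ : Fml) (hq : φ.isQF)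
    (a : ℕ → D) :
    (φ.subst σ).sat M a ↔ φ.sat M (fun x => Tm.eval M a (σ x)) := by
  induction φ with
  | tru => exact Iff.rfl
  | fls => exact Iff.rfl
  | atom p n ts => simp only [Fml.subst, Fml.sat, tm_eval_subst]
  | neg φ ih => exact not_congr (ih hq)
  | conj φ ψ ih₁ ih₂ => exact and_congr (ih₁ hq.1) (ih₂ hq.2)
  | disj φ ψ ih₁ ih₂ => exact or_congr (ih₁ hq.1) (ih₂ hq.2)
  | all x φ ih => exact absurd hq (by simp [Fml.isQF])
  | exi x φ ih => exact absurd hq (by simp [Fml.isQF])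

/-- general coincidence lemma for term evaluation -/
theorem tm_eval_congr {D : Type} {M M' : Struc D} {a a' : ℕ → D} (t : Tm)
    (hfn : ∀ q ∈ t.funs, M.fn q.1 q.2 = M'.fn q.1 q.2)
    (hv : ∀ x ∈ t.vars, a x = a' x) :
    Tm.eval M a t = Tm.eval M' a' t := by
  induction t with
  | var x => exact hv x (by simp [Tm.vars])
  | app f n ts ih =>
      have h1 : M.fn f n = M'.fn f n := hfn (f, n) (by simp [Tm.funs])
      have h2 : (fun i => Tm.eval M a (ts i)) = fun i => Tm.eval M' a' (ts i) := by
        funext i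
        exact ih i (fun q hq => hfn q (by simp [Tm.funs]; exact Or.inr ⟨i, hq⟩))
          (fun x hx => hv x (by simp [Tm.vars]; exact ⟨i, hx⟩))
      simp only [Tm.eval, h1, h2]

/-- general coincidence lemma for satisfaction -/
theorem sat_congr {D : Type} {M M' : Struc D} (φ : Fml) :
    ∀ {a a' : ℕ → D}, M.pr = M'.pr →
    (∀ q ∈ φ.funs, M.fn q.1 q.2 = M'.fn q.1 q.2) →
    (∀ x ∈ φ.free, a x = a' x) →
    (φ.sat M a ↔ φ.sat M' a') := by
  induction φ with
  | tru => intro a a' _ _ _; exact Iff.rfl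
  | fls => intro a a' _ _ _; exact Iff.rfl
  | atom p n ts =>
      intro a a' hpr hfn hv
      have : (fun i => Tm.eval M a (ts i)) = fun i => Tm.eval M' a' (ts i) := by
        funext i
        exact tm_eval_congr (ts i)
          (fun q hq => hfn q (by simp [Fml.funs]; exact ⟨i, hq⟩))
          (fun x hx => hv x (by simp [Fml.free]; exact ⟨i, hx⟩))
      simp only [Fml.sat, this, hpr]
  | neg φ ih => intro a a' hpr hfn hv; exact not_congr (ih hpr hfn hv)
  | conj φ ψ ih₁ ih₂ =>
      intro a a' hpr hfn hv
      exact and_congr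
        (ih₁ hpr (fun q hq => hfn q (Or.inl hq)) (fun x hx => hv x (Or.inl hx)))
        (ih₂ hpr (fun q hq => hfn q (Or.inr hq)) (fun x hx => hv x (Or.inr hx)))
  | disj φ ψ ih₁ ih₂ =>
      intro a a' hpr hfn hv
      exact or_congr
        (ih₁ hpr (fun q hq => hfn q (Or.inl hq)) (fun x hx => hv x (Or.inl hx)))
        (ih₂ hpr (fun q hq => hfn q (Or.inr hq)) (fun x hx => hv x (Or.inr hx)))
  | all x φ ih =>
      intro a a' hpr hfn hv
      refine forall_congr' (fun d => ih hpr hfn ?_)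
      intro y hy
      by_cases hxy : y = x
      · subst hxy; simp [Function.update]
      · simp only [Function.update]
        simp [hxy]
        exact hv y ⟨hy, hxy⟩
  | exi x φ ih =>
      intro a a' hpr hfn hv
      refine exists_congr (fun d => ih hpr hfn ?_)
      intro y hy
      by_cases hxy : y = x
      · subst hxy; simp [Function.update]
      · simp only [Function.update]
        simp [hxy]
        exact hv y ⟨hy, hxy⟩

theorem tm_subst_comp (ρ θ : Subst) (t : Tm) :
    (t.subst ρ).subst θ = t.subst (fun x => (ρ x).subst θ) := by
  induction t with
  | var x => rfl
  | app f n ts ih => simp only [Tm.subst, ih]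

theorem tm_subst_congr {σ σ' : Subst} (t : Tm) (h : ∀ x ∈ t.vars, σ x = σ' x) :
    t.subst σ = t.subst σ' := by
  induction t with
  | var x => exact h x (by simp [Tm.vars])
  | app f n ts ih =>
      simp only [Tm.subst]
      congr 1
      funext i
      exact ih i (fun x hx => h x (by simp [Tm.vars]; exact ⟨i, hx⟩))

theorem fml_subst_comp_qf (ρ θ : Subst) (φ : Fml) (hq : φ.isQF) :
    (φ.subst ρ).subst θ = φ.subst (fun x => (ρ x).subst θ) := by
  induction φ with
  | tru => rfl
  | fls => rfl
  | atom p n ts => simp only [Fml.subst, tm_subst_comp]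
  | neg φ ih => simp only [Fml.subst]; rw [ih hq]
  | conj φ ψ ih₁ ih₂ => simp only [Fml.subst]; rw [ih₁ hq.1, ih₂ hq.2]
  | disj φ ψ ih₁ ih₂ => simp only [Fml.subst]; rw [ih₁ hq.1, ih₂ hq.2]
  | all x φ ih => exact absurd hq (by simp [Fml.isQF])
  | exi x φ ih => exact absurd hq (by simp [Fml.isQF])

theorem fml_subst_congr_qf {σ σ' : Subst} (φ : Fml) (hq : φ.isQF)
    (h : ∀ x ∈ φ.free, σ x = σ' x) :
    φ.subst σ = φ.subst σ' := by
  induction φ with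
  | tru => rfl
  | fls => rfl
  | atom p n ts =>
      simp only [Fml.subst]
      congr 1
      funext i
      exact tm_subst_congr (ts i) (fun x hx => h x (by simp [Fml.free]; exact ⟨i, hx⟩))
  | neg φ ih => simp only [Fml.subst]; rw [ih hq h]
  | conj φ ψ ih₁ ih₂ =>
      simp only [Fml.subst]
      rw [ih₁ hq.1 (fun x hx => h x (Or.inl hx)), ih₂ hq.2 (fun x hx => h x (Or.inr hx))]
  | disj φ ψ ih₁ ih₂ =>
      simp only [Fml.subst]
      rw [ih₁ hq.1 (fun x hx => h x (Or.inl hx)), ih₂ hq.2 (fun x hx => h x (Or.inr hx))]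
  | all x φ ih => exact absurd hq (by simp [Fml.isQF])
  | exi x φ ih => exact absurd hq (by simp [Fml.isQF])

theorem tm_vars_subst (σ : Subst) (t : Tm) {x : ℕ} :
    x ∈ (t.subst σ).vars ↔ ∃ y ∈ t.vars, x ∈ (σ y).vars := by
  induction t with
  | var y => simp [Tm.subst, Tm.vars]
  | app f n ts ih =>
      simp only [Tm.subst, Tm.vars, Set.mem_iUnion]
      constructor
      · rintro ⟨i, hi⟩
        obtain ⟨y, hy1, hy2⟩ := (ih i).1 hi
        exact ⟨y, ⟨i, hy1⟩, hy2⟩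
      · rintro ⟨y, ⟨i, hy1⟩, hy2⟩
        exact ⟨i, (ih i).2 ⟨y, hy1, hy2⟩⟩

theorem tm_funs_subst (σ : Subst) (t : Tm) {q : ℕ × ℕ} :
    q ∈ (t.subst σ).funs ↔ q ∈ t.funs ∨ ∃ y ∈ t.vars, q ∈ (σ y).funs := by
  induction t with
  | var y => simp [Tm.subst, Tm.funs, Tm.vars]
  | app f n ts ih =>
      simp only [Tm.subst, Tm.funs, Tm.vars, Set.mem_insert_iff, Set.mem_iUnion]
      constructor
      · rintro (h | ⟨i, hi⟩)
        · exact Or.inl (Or.inl h)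
        · rcases (ih i).1 hi with h | ⟨y, hy1, hy2⟩
          · exact Or.inl (Or.inr ⟨i, h⟩)
          · exact Or.inr ⟨y, ⟨i, hy1⟩, hy2⟩
      · rintro ((h | ⟨i, hi⟩) | ⟨y, ⟨i, hy1⟩, hy2⟩)
        · exact Or.inl h
        · exact Or.inr ⟨i, (ih i).2 (Or.inl hi)⟩
        · exact Or.inr ⟨i, (ih i).2 (Or.inr ⟨y, hy1, hy2⟩)⟩

end CTIF
namespace CTIF
open Classical

theorem fml_free_subst_qf (σ : Subst) (φ : Fml) (hq : φ.isQF) {x : ℕ} :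
    x ∈ (φ.subst σ).free ↔ ∃ y ∈ φ.free, x ∈ (σ y).vars := by
  induction φ with
  | tru => simp [Fml.subst, Fml.free]
  | fls => simp [Fml.subst, Fml.free]
  | atom p n ts =>
      simp only [Fml.subst, Fml.free, Set.mem_iUnion]
      constructor
      · rintro ⟨i, hi⟩
        obtain ⟨y, hy1, hy2⟩ := (tm_vars_subst σ (ts i)).1 hi
        exact ⟨y, ⟨i, hy1⟩, hy2⟩
      · rintro ⟨y, ⟨i, hy1⟩, hy2⟩
        exact ⟨i, (tm_vars_subst σ (ts i)).2 ⟨y, hy1, hy2⟩⟩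
  | neg φ ih => exact ih hq
  | conj φ ψ ih₁ ih₂ =>
      simp only [Fml.subst, Fml.free, Set.mem_union]
      rw [ih₁ hq.1, ih₂ hq.2]
      constructor
      · rintro (⟨y, hy1, hy2⟩ | ⟨y, hy1, hy2⟩)
        exacts [⟨y, Or.inl hy1, hy2⟩, ⟨y, Or.inr hy1, hy2⟩]
      · rintro ⟨y, hy1 | hy1, hy2⟩
        exacts [Or.inl ⟨y, hy1, hy2⟩, Or.inr ⟨y, hy1, hy2⟩]
  | disj φ ψ ih₁ ih₂ =>
      simp only [Fml.subst, Fml.free, Set.mem_union]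
      rw [ih₁ hq.1, ih₂ hq.2]
      constructor
      · rintro (⟨y, hy1, hy2⟩ | ⟨y, hy1, hy2⟩)
        exacts [⟨y, Or.inl hy1, hy2⟩, ⟨y, Or.inr hy1, hy2⟩]
      · rintro ⟨y, hy1 | hy1, hy2⟩
        exacts [Or.inl ⟨y, hy1, hy2⟩, Or.inr ⟨y, hy1, hy2⟩]
  | all x φ ih => exact absurd hq (by simp [Fml.isQF])
  | exi x φ ih => exact absurd hq (by simp [Fml.isQF])

theorem fml_funs_subst_qf (σ : Subst) (φ : Fml) (hq : φ.isQF) {q : ℕ × ℕ} :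
    q ∈ (φ.subst σ).funs ↔ q ∈ φ.funs ∨ ∃ y ∈ φ.free, q ∈ (σ y).funs := by
  induction φ with
  | tru => simp [Fml.subst, Fml.funs, Fml.free]
  | fls => simp [Fml.subst, Fml.funs, Fml.free]
  | atom p n ts =>
      simp only [Fml.subst, Fml.funs, Fml.free, Set.mem_iUnion]
      constructor
      · rintro ⟨i, hi⟩
        rcases (tm_funs_subst σ (ts i)).1 hi with h | ⟨y, hy1, hy2⟩
        · exact Or.inl ⟨i, h⟩
        · exact Or.inr ⟨y, ⟨i, hy1⟩, hy2⟩
      · rintro (⟨i, hi⟩ | ⟨y, ⟨i, hy1⟩, hy2⟩)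
        · exact ⟨i, (tm_funs_subst σ (ts i)).2 (Or.inl hi)⟩
        · exact ⟨i, (tm_funs_subst σ (ts i)).2 (Or.inr ⟨y, hy1, hy2⟩)⟩
  | neg φ ih => exact ih hq
  | conj φ ψ ih₁ ih₂ =>
      simp only [Fml.subst, Fml.funs, Fml.free, Set.mem_union]
      rw [ih₁ hq.1, ih₂ hq.2]
      constructor
      · rintro ((h | ⟨y, hy1, hy2⟩) | (h | ⟨y, hy1, hy2⟩))
        exacts [Or.inl (Or.inl h), Or.inr ⟨y, Or.inl hy1, hy2⟩,
          Or.inl (Or.inr h), Or.inr ⟨y, Or.inr hy1, hy2⟩]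
      · rintro ((h | h) | ⟨y, hy1 | hy1, hy2⟩)
        exacts [Or.inl (Or.inl h), Or.inr (Or.inl h),
          Or.inl (Or.inr ⟨y, hy1, hy2⟩), Or.inr (Or.inr ⟨y, hy1, hy2⟩)]
  | disj φ ψ ih₁ ih₂ =>
      simp only [Fml.subst, Fml.funs, Fml.free, Set.mem_union]
      rw [ih₁ hq.1, ih₂ hq.2]
      constructor
      · rintro ((h | ⟨y, hy1, hy2⟩) | (h | ⟨y, hy1, hy2⟩))
        exacts [Or.inl (Or.inl h), Or.inr ⟨y, Or.inl hy1, hy2⟩,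
          Or.inl (Or.inr h), Or.inr ⟨y, Or.inr hy1, hy2⟩]
      · rintro ((h | h) | ⟨y, hy1 | hy1, hy2⟩)
        exacts [Or.inl (Or.inl h), Or.inr (Or.inl h),
          Or.inl (Or.inr ⟨y, hy1, hy2⟩), Or.inr (Or.inr ⟨y, hy1, hy2⟩)]
  | all x φ ih => exact absurd hq (by simp [Fml.isQF])
  | exi x φ ih => exact absurd hq (by simp [Fml.isQF])

theorem fml_preds_subst' (φ : Fml) : ∀ (σ : Subst) (b : Bool), (φ.subst σ).preds b = φ.preds b := by
  induction φ with
  | tru => intro σ b; rfl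
  | fls => intro σ b; rfl
  | atom p n ts => intro σ b; rfl
  | neg φ ih => intro σ b; exact ih σ (!b)
  | conj φ ψ ih₁ ih₂ => intro σ b; simp only [Fml.subst, Fml.preds, ih₁, ih₂]
  | disj φ ψ ih₁ ih₂ => intro σ b; simp only [Fml.subst, Fml.preds, ih₁, ih₂]
  | all x φ ih => intro σ b; exact ih _ b
  | exi x φ ih => intro σ b; exact ih _ b

theorem fml_preds_subst (σ : Subst) (φ : Fml) : ∀ b, (φ.subst σ).preds b = φ.preds b :=
  fml_preds_subst' φ σ

theorem fml_isQF_subst (σ : Subst) (φ : Fml) (hq : φ.isQF) : (φ.subst σ).isQF := by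
  induction φ with
  | tru => trivial
  | fls => trivial
  | atom p n ts => trivial
  | neg φ ih => exact ih hq
  | conj φ ψ ih₁ ih₂ => exact ⟨ih₁ hq.1, ih₂ hq.2⟩
  | disj φ ψ ih₁ ih₂ => exact ⟨ih₁ hq.1, ih₂ hq.2⟩
  | all x φ ih => exact absurd hq (by simp [Fml.isQF])
  | exi x φ ih => exact absurd hq (by simp [Fml.isQF])

theorem builtFrom_props {S : Set (ℕ × ℕ)} : ∀ t : Tm, t.builtFrom S →
    t.vars = ∅ ∧ (∀ q ∈ t.funs, q ∈ S) ∧ ∀ x : ℕ, t ≠ .var x := by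
  intro t
  induction t with
  | var x => intro h; exact absurd h (by simp [Tm.builtFrom])
  | app f n ts ih =>
      intro h
      obtain ⟨hf, hts⟩ := h
      refine ⟨?_, ?_, by intro x hx; exact Tm.noConfusion hx⟩
      · simp only [Tm.vars]
        ext x; simp only [Set.mem_iUnion, Set.mem_empty_iff_false, iff_false]
        rintro ⟨i, hi⟩
        rw [(ih i (hts i)).1] at hi
        exact hi
      · intro q hq
        simp only [Tm.funs, Set.mem_insert_iff, Set.mem_iUnion] at hq
        rcases hq with rfl | ⟨i, hi⟩
        · exact hf
        · exact (ih i (hts i)).2.1 q hi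

theorem tm_funs_finite : ∀ t : Tm, t.funs.Finite := by
  intro t
  induction t with
  | var x => simp [Tm.funs]
  | app f n ts ih =>
      simp only [Tm.funs]
      exact Set.Finite.insert _ (Set.finite_iUnion ih)

theorem fml_funs_finite : ∀ φ : Fml, φ.funs.Finite := by
  intro φ
  induction φ with
  | tru => simp [Fml.funs]
  | fls => simp [Fml.funs]
  | atom p n ts => exact Set.finite_iUnion (fun i => tm_funs_finite (ts i))
  | neg φ ih => exact ih
  | conj φ ψ ih₁ ih₂ => exact ih₁.union ih₂
  | disj φ ψ ih₁ ih₂ => exact ih₁.union ih₂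
  | all x φ ih => exact ih
  | exi x φ ih => exact ih

/-- choose a bound strictly above all function symbols of a finite set -/
theorem exists_funs_bound (s : Set (ℕ × ℕ)) (hs : s.Finite) : ∃ N : ℕ, ∀ q ∈ s, q.1 < N := by
  classical
  obtain ⟨t, ht⟩ := Set.Finite.exists_finset_coe hs
  refine ⟨(t.image Prod.fst).sup id + 1, ?_⟩
  intro q hq
  have : q ∈ t := by rw [← ht] at hq; exact_mod_cast hq
  have : q.1 ≤ (t.image Prod.fst).sup id :=
    Finset.le_sup (f := id) (Finset.mem_image_of_mem Prod.fst this)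
  omega

end CTIF
namespace CTIF
open Classical

/-! ### Module 2: propositional evaluation of quantifier-free formulas -/

/-- A propositional valuation on (syntactic) atoms. -/
def Val : Type := ℕ → (n : ℕ) → (Fin n → Tm) → Prop

def peval (v : Val) : Fml → Prop
  | .tru => True
  | .fls => False
  | .atom p n ts => v p n ts
  | .neg φ => ¬ peval v φ
  | .conj φ ψ => peval v φ ∧ peval v ψ
  | .disj φ ψ => peval v φ ∨ peval v ψ
  | .all _ _ => True
  | .exi _ _ => True

/-- satisfaction of a quantifier-free formula is propositional evaluation
at the induced valuation -/
theorem sat_eq_peval {D : Type} (M : Struc D) (a : ℕ → D) (φ : Fml) (hq : φ.isQF) :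
    φ.sat M a ↔ peval (fun p n ts => M.pr p n (fun i => (ts i).eval M a)) φ := by
  induction φ with
  | tru => exact Iff.rfl
  | fls => exact Iff.rfl
  | atom p n ts => exact Iff.rfl
  | neg φ ih => exact not_congr (ih hq)
  | conj φ ψ ih₁ ih₂ => exact and_congr (ih₁ hq.1) (ih₂ hq.2)
  | disj φ ψ ih₁ ih₂ => exact or_congr (ih₁ hq.1) (ih₂ hq.2)
  | all x φ ih => exact absurd hq (by simp [Fml.isQF])
  | exi x φ ih => exact absurd hq (by simp [Fml.isQF])

/-- the list of atomic subformulas -/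
def atomsOf : Fml → List Fml
  | .tru => []
  | .fls => []
  | .atom p n ts => [.atom p n ts]
  | .neg φ => atomsOf φ
  | .conj φ ψ => atomsOf φ ++ atomsOf ψ
  | .disj φ ψ => atomsOf φ ++ atomsOf ψ
  | .all _ φ => atomsOf φ
  | .exi _ φ => atomsOf φ

/-- polarity-tagged occurrences of atoms -/
def aocc : Fml → Bool → Set (Fml × Bool)
  | .tru, _ => ∅
  | .fls, _ => ∅
  | .atom p n ts, b => {(.atom p n ts, b)}
  | .neg φ, b => aocc φ (!b)
  | .conj φ ψ, b => aocc φ b ∪ aocc ψ b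
  | .disj φ ψ, b => aocc φ b ∪ aocc ψ b
  | .all _ φ, b => aocc φ b
  | .exi _ φ, b => aocc φ b

theorem aocc_mem_atomsOf {φ : Fml} : ∀ {b : Bool} {α : Fml} {c : Bool},
    (α, c) ∈ aocc φ b → α ∈ atomsOf φ := by
  induction φ with
  | tru => intro b α c h; exact absurd h (by simp [aocc])
  | fls => intro b α c h; exact absurd h (by simp [aocc])
  | atom p n ts =>
      intro b α c h
      simp only [aocc, Set.mem_singleton_iff, Prod.mk.injEq] at h
      simp [atomsOf, h.1]
  | neg φ ih => intro b α c h; exact ih h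
  | conj φ ψ ih₁ ih₂ =>
      intro b α c h
      rcases h with h | h
      · exact List.mem_append_left _ (ih₁ h)
      · exact List.mem_append_right _ (ih₂ h)
  | disj φ ψ ih₁ ih₂ =>
      intro b α c h
      rcases h with h | h
      · exact List.mem_append_left _ (ih₁ h)
      · exact List.mem_append_right _ (ih₂ h)
  | all x φ ih => intro b α c h; exact ih h
  | exi x φ ih => intro b α c h; exact ih h

theorem aocc_mem_preds {φ : Fml} : ∀ {b : Bool} {p n : ℕ} {ts : Fin n → Tm} {c : Bool},
    (Fml.atom p n ts, c) ∈ aocc φ b → (p, c) ∈ φ.preds b := by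
  induction φ with
  | tru => intro b p n ts c h; exact absurd h (by simp [aocc])
  | fls => intro b p n ts c h; exact absurd h (by simp [aocc])
  | atom p' n' ts' =>
      intro b p n ts c h
      simp only [aocc, Set.mem_singleton_iff, Prod.mk.injEq] at h
      obtain ⟨h1, h2⟩ := h
      cases h1
      simp [Fml.preds, h2]
  | neg φ ih => intro b p n ts c h; exact ih h
  | conj φ ψ ih₁ ih₂ =>
      intro b p n ts c h
      rcases h with h | h
      · exact Or.inl (ih₁ h)
      · exact Or.inr (ih₂ h)
  | disj φ ψ ih₁ ih₂ =>
      intro b p n ts c h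
      rcases h with h | h
      · exact Or.inl (ih₁ h)
      · exact Or.inr (ih₂ h)
  | all x φ ih => intro b p n ts c h; exact ih h
  | exi x φ ih => intro b p n ts c h; exact ih h

theorem atomsOf_mem_props {φ : Fml} (hq : φ.isQF) : ∀ {p n : ℕ} {ts : Fin n → Tm},
    (Fml.atom p n ts) ∈ atomsOf φ →
      (∀ i, (ts i).funs ⊆ φ.funs) ∧ (∀ i, (ts i).vars ⊆ φ.free) := by
  induction φ with
  | tru => intro p n ts h; exact absurd h (by simp [atomsOf])
  | fls => intro p n ts h; exact absurd h (by simp [atomsOf])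
  | atom p' n' ts' =>
      intro p n ts h
      simp only [atomsOf, List.mem_singleton] at h
      cases h
      constructor
      · intro i q hq; simp only [Fml.funs, Set.mem_iUnion]; exact ⟨i, hq⟩
      · intro i x hx; simp only [Fml.free, Set.mem_iUnion]; exact ⟨i, hx⟩
  | neg φ ih => intro p n ts h; exact ih hq h
  | conj φ ψ ih₁ ih₂ =>
      intro p n ts h
      rcases List.mem_append.1 h with h | h
      · exact ⟨fun i => (ih₁ hq.1 h).1 i |>.trans Set.subset_union_left,
          fun i => (ih₁ hq.1 h).2 i |>.trans Set.subset_union_left⟩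
      · exact ⟨fun i => (ih₂ hq.2 h).1 i |>.trans Set.subset_union_right,
          fun i => (ih₂ hq.2 h).2 i |>.trans Set.subset_union_right⟩
  | disj φ ψ ih₁ ih₂ =>
      intro p n ts h
      rcases List.mem_append.1 h with h | h
      · exact ⟨fun i => (ih₁ hq.1 h).1 i |>.trans Set.subset_union_left,
          fun i => (ih₁ hq.1 h).2 i |>.trans Set.subset_union_left⟩
      · exact ⟨fun i => (ih₂ hq.2 h).1 i |>.trans Set.subset_union_right,
          fun i => (ih₂ hq.2 h).2 i |>.trans Set.subset_union_right⟩
  | all x φ ih => exact absurd hq (by simp [Fml.isQF])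
  | exi x φ ih => exact absurd hq (by simp [Fml.isQF])

theorem atomsOf_shape {φ : Fml} : ∀ {α : Fml}, α ∈ atomsOf φ →
    ∃ p n ts, α = Fml.atom p n ts := by
  induction φ with
  | tru => intro α h; exact absurd h (by simp [atomsOf])
  | fls => intro α h; exact absurd h (by simp [atomsOf])
  | atom p n ts =>
      intro α h
      simp only [atomsOf, List.mem_singleton] at h
      exact ⟨p, n, ts, h⟩
  | neg φ ih => exact ih
  | conj φ ψ ih₁ ih₂ =>
      intro α h
      rcases List.mem_append.1 h with h | h
      exacts [ih₁ h, ih₂ h]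
  | disj φ ψ ih₁ ih₂ =>
      intro α h
      rcases List.mem_append.1 h with h | h
      exacts [ih₁ h, ih₂ h]
  | all x φ ih => exact ih
  | exi x φ ih => exact ih

/-- peval only depends on the values at atoms occurring in the formula -/
theorem peval_congr {v v' : Val} {φ : Fml}
    (h : ∀ p n ts, (Fml.atom p n ts) ∈ atomsOf φ → (v p n ts ↔ v' p n ts)) :
    peval v φ ↔ peval v' φ := by
  induction φ with
  | tru => exact Iff.rfl
  | fls => exact Iff.rfl
  | atom p n ts => exact h p n ts (by simp [atomsOf])
  | neg φ ih => exact not_congr (ih h)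
  | conj φ ψ ih₁ ih₂ =>
      exact and_congr (ih₁ fun p n ts hm => h p n ts (List.mem_append_left _ hm))
        (ih₂ fun p n ts hm => h p n ts (List.mem_append_right _ hm))
  | disj φ ψ ih₁ ih₂ =>
      exact or_congr (ih₁ fun p n ts hm => h p n ts (List.mem_append_left _ hm))
        (ih₂ fun p n ts hm => h p n ts (List.mem_append_right _ hm))
  | all x φ ih => exact Iff.rfl
  | exi x φ ih => exact Iff.rfl

/-- mixing (polarity monotonicity) lemma for propositional evaluation -/
theorem peval_mix (x y : Val) (φ : Fml) : ∀ b : Bool,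
    (∀ p n ts, ¬ x p n ts → y p n ts → (Fml.atom p n ts, false) ∉ aocc φ b) →
    (∀ p n ts, x p n ts → ¬ y p n ts → (Fml.atom p n ts, true) ∉ aocc φ b) →
    ((b = true → peval x φ → peval y φ) ∧ (b = false → peval y φ → peval x φ)) := by
  induction φ with
  | tru => intro b _ _; exact ⟨fun _ => id, fun _ => id⟩
  | fls => intro b _ _; exact ⟨fun _ => id, fun _ => id⟩
  | atom p n ts =>
      intro b hr hl
      constructor
      · rintro rfl hx
        by_contra hy
        exact hl p n ts hx hy (by simp [aocc])
      · rintro rfl hy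
        by_contra hx
        exact hr p n ts hx hy (by simp [aocc])
  | neg φ ih =>
      intro b hr hl
      have := ih (!b) (by simpa [aocc] using hr) (by simpa [aocc] using hl)
      constructor
      · rintro rfl hx hy
        exact hx ((this.2 rfl) hy)
      · rintro rfl hy hx
        exact hy ((this.1 rfl) hx)
  | conj φ ψ ih₁ ih₂ =>
      intro b hr hl
      have h₁ := ih₁ b (fun p n ts h1 h2 hm => hr p n ts h1 h2 (Or.inl hm))
        (fun p n ts h1 h2 hm => hl p n ts h1 h2 (Or.inl hm))
      have h₂ := ih₂ b (fun p n ts h1 h2 hm => hr p n ts h1 h2 (Or.inr hm))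
        (fun p n ts h1 h2 hm => hl p n ts h1 h2 (Or.inr hm))
      constructor
      · rintro rfl ⟨ha, hb⟩; exact ⟨h₁.1 rfl ha, h₂.1 rfl hb⟩
      · rintro rfl ⟨ha, hb⟩; exact ⟨h₁.2 rfl ha, h₂.2 rfl hb⟩
  | disj φ ψ ih₁ ih₂ =>
      intro b hr hl
      have h₁ := ih₁ b (fun p n ts h1 h2 hm => hr p n ts h1 h2 (Or.inl hm))
        (fun p n ts h1 h2 hm => hl p n ts h1 h2 (Or.inl hm))
      have h₂ := ih₂ b (fun p n ts h1 h2 hm => hr p n ts h1 h2 (Or.inr hm))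
        (fun p n ts h1 h2 hm => hl p n ts h1 h2 (Or.inr hm))
      constructor
      · rintro rfl (ha | hb)
        exacts [Or.inl (h₁.1 rfl ha), Or.inr (h₂.1 rfl hb)]
      · rintro rfl (ha | hb)
        exacts [Or.inl (h₁.2 rfl ha), Or.inr (h₂.2 rfl hb)]
  | all x' φ ih => intro b _ _; exact ⟨fun _ => id, fun _ => id⟩
  | exi x' φ ih => intro b _ _; exact ⟨fun _ => id, fun _ => id⟩

/-! ### big conjunctions and disjunctions -/

def conjList : List Fml → Fml := List.foldr Fml.conj Fml.tru
def disjList : List Fml → Fml := List.foldr Fml.disj Fml.fls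

theorem peval_conjList (v : Val) (L : List Fml) :
    peval v (conjList L) ↔ ∀ φ ∈ L, peval v φ := by
  induction L with
  | nil => simp [conjList, peval]
  | cons φ L ih =>
      simp only [conjList, List.foldr_cons, List.mem_cons]
      show peval v φ ∧ peval v (conjList L) ↔ _
      rw [ih]
      constructor
      · rintro ⟨h1, h2⟩ ψ (rfl | hm)
        exacts [h1, h2 ψ hm]
      · intro h
        exact ⟨h φ (Or.inl rfl), fun ψ hm => h ψ (Or.inr hm)⟩

theorem peval_disjList (v : Val) (L : List Fml) :
    peval v (disjList L) ↔ ∃ φ ∈ L, peval v φ := by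
  induction L with
  | nil => simp [disjList, peval]
  | cons φ L ih =>
      simp only [disjList, List.foldr_cons, List.mem_cons]
      show peval v φ ∨ peval v (disjList L) ↔ _
      rw [ih]
      constructor
      · rintro (h | ⟨ψ, hm, hψ⟩)
        exacts [⟨φ, Or.inl rfl, h⟩, ⟨ψ, Or.inr hm, hψ⟩]
      · rintro ⟨ψ, rfl | hm, hψ⟩
        exacts [Or.inl hψ, Or.inr ⟨ψ, hm, hψ⟩]

theorem conjList_isQF {L : List Fml} (h : ∀ φ ∈ L, φ.isQF) : (conjList L).isQF := by
  induction L with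
  | nil => trivial
  | cons φ L ih =>
      exact ⟨h φ (List.mem_cons_self), ih fun ψ hm => h ψ (List.mem_cons_of_mem _ hm)⟩

theorem disjList_isQF {L : List Fml} (h : ∀ φ ∈ L, φ.isQF) : (disjList L).isQF := by
  induction L with
  | nil => trivial
  | cons φ L ih =>
      exact ⟨h φ (List.mem_cons_self), ih fun ψ hm => h ψ (List.mem_cons_of_mem _ hm)⟩

theorem conjList_preds {L : List Fml} {b : Bool} {q : ℕ × Bool}
    (h : q ∈ (conjList L).preds b) : ∃ φ ∈ L, q ∈ φ.preds b := by
  induction L with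
  | nil => exact absurd h (by simp [conjList, Fml.preds])
  | cons φ L ih =>
      rcases h with h | h
      · exact ⟨φ, List.mem_cons_self, h⟩
      · obtain ⟨ψ, hm, hψ⟩ := ih h
        exact ⟨ψ, List.mem_cons_of_mem _ hm, hψ⟩

theorem disjList_preds {L : List Fml} {b : Bool} {q : ℕ × Bool}
    (h : q ∈ (disjList L).preds b) : ∃ φ ∈ L, q ∈ φ.preds b := by
  induction L with
  | nil => exact absurd h (by simp [disjList, Fml.preds])
  | cons φ L ih =>
      rcases h with h | h
      · exact ⟨φ, List.mem_cons_self, h⟩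
      · obtain ⟨ψ, hm, hψ⟩ := ih h
        exact ⟨ψ, List.mem_cons_of_mem _ hm, hψ⟩

theorem conjList_funs {L : List Fml} {q : ℕ × ℕ}
    (h : q ∈ (conjList L).funs) : ∃ φ ∈ L, q ∈ φ.funs := by
  induction L with
  | nil => exact absurd h (by simp [conjList, Fml.funs])
  | cons φ L ih =>
      rcases h with h | h
      · exact ⟨φ, List.mem_cons_self, h⟩
      · obtain ⟨ψ, hm, hψ⟩ := ih h
        exact ⟨ψ, List.mem_cons_of_mem _ hm, hψ⟩

theorem disjList_funs {L : List Fml} {q : ℕ × ℕ}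
    (h : q ∈ (disjList L).funs) : ∃ φ ∈ L, q ∈ φ.funs := by
  induction L with
  | nil => exact absurd h (by simp [disjList, Fml.funs])
  | cons φ L ih =>
      rcases h with h | h
      · exact ⟨φ, List.mem_cons_self, h⟩
      · obtain ⟨ψ, hm, hψ⟩ := ih h
        exact ⟨ψ, List.mem_cons_of_mem _ hm, hψ⟩

theorem conjList_funs_sup {L : List Fml} {φ : Fml} (hm : φ ∈ L) : φ.funs ⊆ (conjList L).funs := by
  induction L with
  | nil => exact absurd hm (by simp)
  | cons ψ L ih =>
      rcases List.mem_cons.1 hm with rfl | hm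
      · exact Set.subset_union_left
      · exact (ih hm).trans Set.subset_union_right

theorem disjList_funs_sup {L : List Fml} {φ : Fml} (hm : φ ∈ L) : φ.funs ⊆ (disjList L).funs := by
  induction L with
  | nil => exact absurd hm (by simp)
  | cons ψ L ih =>
      rcases List.mem_cons.1 hm with rfl | hm
      · exact Set.subset_union_left
      · exact (ih hm).trans Set.subset_union_right

theorem conjList_free {L : List Fml} {x : ℕ}
    (h : x ∈ (conjList L).free) : ∃ φ ∈ L, x ∈ φ.free := by
  induction L with
  | nil => exact absurd h (by simp [conjList, Fml.free])
  | cons φ L ih =>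
      rcases h with h | h
      · exact ⟨φ, List.mem_cons_self, h⟩
      · obtain ⟨ψ, hm, hψ⟩ := ih h
        exact ⟨ψ, List.mem_cons_of_mem _ hm, hψ⟩

theorem disjList_free {L : List Fml} {x : ℕ}
    (h : x ∈ (disjList L).free) : ∃ φ ∈ L, x ∈ φ.free := by
  induction L with
  | nil => exact absurd h (by simp [disjList, Fml.free])
  | cons φ L ih =>
      rcases h with h | h
      · exact ⟨φ, List.mem_cons_self, h⟩
      · obtain ⟨ψ, hm, hψ⟩ := ih h
        exact ⟨ψ, List.mem_cons_of_mem _ hm, hψ⟩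

theorem conjList_free_sup {L : List Fml} {φ : Fml} (hm : φ ∈ L) : φ.free ⊆ (conjList L).free := by
  induction L with
  | nil => exact absurd hm (by simp)
  | cons ψ L ih =>
      rcases List.mem_cons.1 hm with rfl | hm
      · exact Set.subset_union_left
      · exact (ih hm).trans Set.subset_union_right

theorem disjList_free_sup {L : List Fml} {φ : Fml} (hm : φ ∈ L) : φ.free ⊆ (disjList L).free := by
  induction L with
  | nil => exact absurd hm (by simp)
  | cons ψ L ih =>
      rcases List.mem_cons.1 hm with rfl | hm
      · exact Set.subset_union_left
      · exact (ih hm).trans Set.subset_union_right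

theorem subst_conjList (σ : Subst) (L : List Fml) :
    (conjList L).subst σ = conjList (L.map (Fml.subst σ)) := by
  induction L with
  | nil => rfl
  | cons φ L ih =>
      have h0 : Fml.subst σ (conjList (φ :: L)) = (Fml.subst σ φ).conj (Fml.subst σ (conjList L)) := rfl
      rw [h0, ih]; rfl

theorem subst_disjList (σ : Subst) (L : List Fml) :
    (disjList L).subst σ = disjList (L.map (Fml.subst σ)) := by
  induction L with
  | nil => rfl
  | cons φ L ih =>
      have h0 : Fml.subst σ (disjList (φ :: L)) = (Fml.subst σ φ).disj (Fml.subst σ (disjList L)) := rfl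
      rw [h0, ih]; rfl

theorem sat_conjList {D : Type} (M : Struc D) (a : ℕ → D) (L : List Fml) :
    (conjList L).sat M a ↔ ∀ φ ∈ L, φ.sat M a := by
  induction L with
  | nil => simp [conjList, Fml.sat]
  | cons φ L ih =>
      show φ.sat M a ∧ (conjList L).sat M a ↔ _
      rw [ih]
      constructor
      · rintro ⟨h1, h2⟩ ψ hm
        rcases List.mem_cons.1 hm with rfl | hm
        exacts [h1, h2 ψ hm]
      · intro h
        exact ⟨h φ (List.mem_cons_self), fun ψ hm => h ψ (List.mem_cons_of_mem _ hm)⟩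

theorem sat_disjList {D : Type} (M : Struc D) (a : ℕ → D) (L : List Fml) :
    (disjList L).sat M a ↔ ∃ φ ∈ L, φ.sat M a := by
  induction L with
  | nil => simp [disjList, Fml.sat]
  | cons φ L ih =>
      show φ.sat M a ∨ (disjList L).sat M a ↔ _
      rw [ih]
      constructor
      · rintro (h | ⟨ψ, hm, hψ⟩)
        exacts [⟨φ, List.mem_cons_self, h⟩, ⟨ψ, List.mem_cons_of_mem _ hm, hψ⟩]
      · rintro ⟨ψ, hm, hψ⟩
        rcases List.mem_cons.1 hm with rfl | hm
        exacts [Or.inl hψ, Or.inr ⟨ψ, hm, hψ⟩]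

end CTIF
namespace CTIF
attribute [local instance] Classical.propDecidable

/-! ### Module 3: propositional (ground) Lyndon interpolation -/

/-- all function symbols of the argument terms lie in the functions of `B` -/
def fnsOK (B : Fml) {n : ℕ} (ts : Fin n → Tm) : Prop := ∀ i, (ts i).funs ⊆ B.funs

def alP (A B : Fml) (p : ℕ) {n : ℕ} (ts : Fin n → Tm) : Prop :=
  (p, true) ∈ A.pred ∧ (p, true) ∈ B.pred ∧ fnsOK B ts

def alN (A B : Fml) (p : ℕ) {n : ℕ} (ts : Fin n → Tm) : Prop :=
  (p, false) ∈ A.pred ∧ (p, false) ∈ B.pred ∧ fnsOK B ts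

noncomputable def interpLit (A B : Fml) (T : List Fml) : Fml → Fml
  | .atom p n ts =>
      if (Fml.atom p n ts) ∈ T then (if alP A B p ts then .atom p n ts else .tru)
      else (if alN A B p ts then .neg (.atom p n ts) else .tru)
  | _ => .tru

noncomputable def interpC (A B : Fml) (T : List Fml) : Fml :=
  conjList ((atomsOf A).map (interpLit A B T))

noncomputable def interpH (A B : Fml) : Fml :=
  disjList ((atomsOf A).sublists.map fun T =>
    if peval (fun p n ts => (Fml.atom p n ts) ∈ T) A then interpC A B T else .fls)

theorem interp_sound_left (A B : Fml) (v : Val) (hv : peval v A) :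
    peval v (interpH A B) := by
  set T : List Fml := (atomsOf A).filter (fun α => decide (peval v α)) with hT
  have hTsub : ∀ {α : Fml}, α ∈ T → α ∈ atomsOf A ∧ peval v α := by
    intro α hα
    have := List.mem_filter.1 hα
    exact ⟨this.1, of_decide_eq_true this.2⟩
  have hTmem : ∀ {α : Fml}, α ∈ atomsOf A → peval v α → α ∈ T := by
    intro α h1 h2
    exact List.mem_filter.2 ⟨h1, decide_eq_true h2⟩
  rw [interpH, peval_disjList]
  have hTsl : T ∈ (atomsOf A).sublists := by
    rw [hT]; exact List.mem_sublists.2 (List.filter_sublist)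
  refine ⟨_, List.mem_map_of_mem hTsl, ?_⟩
  have hgate : peval (fun p n ts => (Fml.atom p n ts) ∈ T) A := by
    refine (peval_congr (v' := v) ?_).2 ?_; swap
    · exact hv
    · intro p n ts hmem
      constructor
      · intro h; exact (hTsub h).2
      · intro h; exact hTmem hmem h
  rw [if_pos hgate]
  rw [interpC, peval_conjList]
  intro ψ hψ
  obtain ⟨α, hα, rfl⟩ := List.mem_map.1 hψ
  obtain ⟨p, n, ts, rfl⟩ := atomsOf_shape hα
  by_cases hmem : (Fml.atom p n ts) ∈ T
  · rw [interpLit, if_pos hmem]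
    by_cases hal : alP A B p ts
    · rw [if_pos hal]; exact (hTsub hmem).2
    · rw [if_neg hal]; trivial
  · rw [interpLit, if_neg hmem]
    by_cases hal : alN A B p ts
    · rw [if_pos hal]
      intro hvp
      exact hmem (hTmem hα hvp)
    · rw [if_neg hal]; trivial

theorem interp_sound_right (A B : Fml) (hqA : A.isQF) (hqB : B.isQF)
    (hEnt : ∀ v : Val, peval v A → peval v B) (v : Val)
    (hv : peval v (interpH A B)) : peval v B := by
  rw [interpH, peval_disjList] at hv
  obtain ⟨ψ, hψ, hpev⟩ := hv
  obtain ⟨T, hTsl, rfl⟩ := List.mem_map.1 hψ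
  set w : Val := fun p n ts => (Fml.atom p n ts) ∈ T with hwdef
  by_cases hgate : peval w A
  swap
  · rw [if_neg hgate] at hpev; exact absurd hpev (by simp [peval])
  rw [if_pos hgate] at hpev
  have hTsub : ∀ {α : Fml}, α ∈ T → α ∈ atomsOf A :=
    fun hα => (List.mem_sublists.1 hTsl).subset hα
  -- the pins from the conjunction
  have pins : ∀ p n (ts : Fin n → Tm), (Fml.atom p n ts) ∈ atomsOf A →
      (alP A B p ts → w p n ts → v p n ts) ∧ (alN A B p ts → ¬ w p n ts → ¬ v p n ts) := by
    intro p n ts hmem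
    have hlit := (peval_conjList v _).1 hpev _ (List.mem_map_of_mem hmem)
    constructor
    · intro hal hw
      rw [interpLit, if_pos hw, if_pos hal] at hlit
      exact hlit
    · intro hal hw
      rw [interpLit, if_neg hw, if_pos hal] at hlit
      exact hlit
  -- the mixture valuation
  set u : Val := fun p n ts =>
    if (Fml.atom p n ts) ∈ atomsOf A ∧ (¬ fnsOK B ts ∨
          ((w p n ts ∧ (p, true) ∈ A.pred) ∨ (¬ w p n ts ∧ (p, false) ∈ A.pred)))
    then w p n ts else v p n ts with hudef
  -- A-side: peval u A
  have huA : peval u A := by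
    refine (peval_mix w u A true ?_ ?_).1 rfl hgate
    · -- raised atoms must not occur negatively in A
      intro p n ts hnw hu hocc
      have hmem : (Fml.atom p n ts) ∈ atomsOf A := aocc_mem_atomsOf hocc
      have hpredA : (p, false) ∈ A.pred := aocc_mem_preds hocc
      simp only [hudef] at hu
      by_cases hc : (Fml.atom p n ts) ∈ atomsOf A ∧ (¬ fnsOK B ts ∨
          ((w p n ts ∧ (p, true) ∈ A.pred) ∨ (¬ w p n ts ∧ (p, false) ∈ A.pred)))
      · rw [if_pos hc] at hu; exact hnw hu
      · -- u = v here; so the condition fails; but ¬w ∧ (p,false) ∈ A.pred would make it hold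
        -- unless fnsOK holds and both disjuncts fail
        exact hc ⟨hmem, Or.inr (Or.inr ⟨hnw, hpredA⟩)⟩
    · -- lowered atoms must not occur positively in A
      intro p n ts hw hnu hocc
      have hmem : (Fml.atom p n ts) ∈ atomsOf A := aocc_mem_atomsOf hocc
      have hpredA : (p, true) ∈ A.pred := aocc_mem_preds hocc
      simp only [hudef] at hnu
      by_cases hc : (Fml.atom p n ts) ∈ atomsOf A ∧ (¬ fnsOK B ts ∨
          ((w p n ts ∧ (p, true) ∈ A.pred) ∨ (¬ w p n ts ∧ (p, false) ∈ A.pred)))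
      · rw [if_pos hc] at hnu; exact hnu hw
      · exact hc ⟨hmem, Or.inr (Or.inl ⟨hw, hpredA⟩)⟩
  have huB : peval u B := hEnt u huA
  -- B-side: peval v B
  refine (peval_mix u v B true ?_ ?_).1 rfl huB
  · -- atoms raised from u to v must not occur negatively in B
    intro p n ts hnu hv hocc
    have hmemB : (Fml.atom p n ts) ∈ atomsOf B := aocc_mem_atomsOf hocc
    have hpredB : (p, false) ∈ B.pred := aocc_mem_preds hocc
    have hfok : fnsOK B ts := (atomsOf_mem_props hqB hmemB).1
    simp only [hudef] at hnu
    by_cases hc : (Fml.atom p n ts) ∈ atomsOf A ∧ (¬ fnsOK B ts ∨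
          ((w p n ts ∧ (p, true) ∈ A.pred) ∨ (¬ w p n ts ∧ (p, false) ∈ A.pred)))
    · rw [if_pos hc] at hnu
      -- u = w, ¬w, v: C2 must give (p,false) ∈ A.pred, and pin gives ¬alN hence (p,false) ∉ B.pred
      rcases hc.2 with hnf | hC2
      · exact hnf hfok
      · rcases hC2 with ⟨hw, _⟩ | ⟨_, hpA⟩
        · exact hnu hw
        · have := (pins p n ts hc.1).2
          have hnal : ¬ alN A B p ts := fun hal => (this hal hnu) hv
          exact hnal ⟨hpA, hpredB, hfok⟩
    · rw [if_neg hc] at hnu; exact hnu hv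
  · -- atoms lowered from u to v must not occur positively in B
    intro p n ts hu hnv hocc
    have hmemB : (Fml.atom p n ts) ∈ atomsOf B := aocc_mem_atomsOf hocc
    have hpredB : (p, true) ∈ B.pred := aocc_mem_preds hocc
    have hfok : fnsOK B ts := (atomsOf_mem_props hqB hmemB).1
    simp only [hudef] at hu
    by_cases hc : (Fml.atom p n ts) ∈ atomsOf A ∧ (¬ fnsOK B ts ∨
          ((w p n ts ∧ (p, true) ∈ A.pred) ∨ (¬ w p n ts ∧ (p, false) ∈ A.pred)))
    · rw [if_pos hc] at hu
      rcases hc.2 with hnf | hC2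
      · exact hnf hfok
      · rcases hC2 with ⟨_, hpA⟩ | ⟨hnw, _⟩
        · have := (pins p n ts hc.1).1
          have hnal : ¬ alP A B p ts := fun hal => hnv (this hal hu)
          exact hnal ⟨hpA, hpredB, hfok⟩
        · exact hnw hu
    · rw [if_neg hc] at hu; exact hnv hu

theorem interp_syntactic (A B : Fml) (hqA : A.isQF) :
    (interpH A B).isQF ∧
    (interpH A B).pred ⊆ A.pred ∩ B.pred ∧
    (interpH A B).funs ⊆ A.funs ∩ B.funs ∧
    (interpH A B).free ⊆ A.free := by
  have hlit : ∀ T α, α ∈ atomsOf A →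
      (interpLit A B T α).isQF ∧
      (∀ b q, q ∈ (interpLit A B T α).preds b → b = true → q ∈ A.pred ∩ B.pred) ∧
      (interpLit A B T α).funs ⊆ A.funs ∩ B.funs ∧
      (interpLit A B T α).free ⊆ A.free := by
    intro T α hα
    obtain ⟨p, n, ts, rfl⟩ := atomsOf_shape hα
    have hfA : ∀ i, (ts i).funs ⊆ A.funs := (atomsOf_mem_props hqA hα).1
    have hvA : ∀ i, (ts i).vars ⊆ A.free := (atomsOf_mem_props hqA hα).2
    by_cases hmem : (Fml.atom p n ts) ∈ T
    · rw [interpLit, if_pos hmem]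
      by_cases hal : alP A B p ts
      · rw [if_pos hal]
        refine ⟨trivial, ?_, ?_, ?_⟩
        · intro b q hq hb
          subst hb
          simp only [Fml.preds, Set.mem_singleton_iff] at hq
          subst hq
          exact ⟨hal.1, hal.2.1⟩
        · intro q hq
          simp only [Fml.funs, Set.mem_iUnion] at hq
          obtain ⟨i, hi⟩ := hq
          exact ⟨hfA i hi, hal.2.2 i hi⟩
        · intro x hx
          simp only [Fml.free, Set.mem_iUnion] at hx
          obtain ⟨i, hi⟩ := hx
          exact hvA i hi
      · rw [if_neg hal]
        exact ⟨trivial, fun b q hq _ => absurd hq (by simp [Fml.preds]),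
          by simp [Fml.funs], by simp [Fml.free]⟩
    · rw [interpLit, if_neg hmem]
      by_cases hal : alN A B p ts
      · rw [if_pos hal]
        refine ⟨trivial, ?_, ?_, ?_⟩
        · intro b q hq hb
          subst hb
          simp only [Fml.preds, Set.mem_singleton_iff] at hq
          subst hq
          exact ⟨hal.1, hal.2.1⟩
        · intro q hq
          simp only [Fml.funs, Set.mem_iUnion] at hq
          obtain ⟨i, hi⟩ := hq
          exact ⟨hfA i hi, hal.2.2 i hi⟩
        · intro x hx
          simp only [Fml.free, Set.mem_iUnion] at hx
          obtain ⟨i, hi⟩ := hx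
          exact hvA i hi
      · rw [if_neg hal]
        exact ⟨trivial, fun b q hq _ => absurd hq (by simp [Fml.preds]),
          by simp [Fml.funs], by simp [Fml.free]⟩
  refine ⟨?_, ?_, ?_, ?_⟩
  · -- isQF
    refine disjList_isQF ?_
    intro ψ hψ
    obtain ⟨T, _, rfl⟩ := List.mem_map.1 hψ
    by_cases hgate : peval (fun p n ts => (Fml.atom p n ts) ∈ T) A
    · rw [if_pos hgate]
      refine conjList_isQF ?_
      intro χ hχ
      obtain ⟨α, hα, rfl⟩ := List.mem_map.1 hχ
      exact (hlit T α hα).1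
    · rw [if_neg hgate]; trivial
  · -- pred
    intro q hq
    obtain ⟨ψ, hψ, hq⟩ := disjList_preds hq
    obtain ⟨T, _, rfl⟩ := List.mem_map.1 hψ
    by_cases hgate : peval (fun p n ts => (Fml.atom p n ts) ∈ T) A
    · rw [if_pos hgate] at hq
      obtain ⟨χ, hχ, hq⟩ := conjList_preds hq
      obtain ⟨α, hα, rfl⟩ := List.mem_map.1 hχ
      exact (hlit T α hα).2.1 true q hq rfl
    · rw [if_neg hgate] at hq
      exact absurd hq (by simp [Fml.preds])
  · -- funs
    intro q hq
    obtain ⟨ψ, hψ, hq⟩ := disjList_funs hq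
    obtain ⟨T, _, rfl⟩ := List.mem_map.1 hψ
    by_cases hgate : peval (fun p n ts => (Fml.atom p n ts) ∈ T) A
    · rw [if_pos hgate] at hq
      obtain ⟨χ, hχ, hq⟩ := conjList_funs hq
      obtain ⟨α, hα, rfl⟩ := List.mem_map.1 hχ
      exact (hlit T α hα).2.2.1 hq
    · rw [if_neg hgate] at hq
      exact absurd hq (by simp [Fml.funs])
  · -- free
    intro x hx
    obtain ⟨ψ, hψ, hx⟩ := disjList_free hx
    obtain ⟨T, _, rfl⟩ := List.mem_map.1 hψ
    by_cases hgate : peval (fun p n ts => (Fml.atom p n ts) ∈ T) A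
    · rw [if_pos hgate] at hx
      obtain ⟨χ, hχ, hx⟩ := conjList_free hx
      obtain ⟨α, hα, rfl⟩ := List.mem_map.1 hχ
      exact (hlit T α hα).2.2.2 hx
    · rw [if_neg hgate] at hx
      exact absurd hx (by simp [Fml.free])

end CTIF
namespace CTIF
attribute [local instance] Classical.propDecidable

/-! ### Module 4: propositional compactness (Lindenbaum via Zorn) -/

def FinSat (X : Set Fml) : Prop :=
  ∀ T : Finset Fml, ↑T ⊆ X → ∃ v : Val, ∀ φ ∈ T, peval v φ

theorem finsat_insert {X : Set Fml} (hX : FinSat X) (φ : Fml) :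
    FinSat (insert φ X) ∨ FinSat (insert (.neg φ) X) := by
  by_contra hc
  push_neg at hc
  obtain ⟨h1, h2⟩ := hc
  rw [FinSat] at h1 h2
  push_neg at h1 h2
  obtain ⟨T1, hT1, hv1⟩ := h1
  obtain ⟨T2, hT2, hv2⟩ := h2
  obtain ⟨v, hv⟩ := hX ((T1.erase φ) ∪ (T2.erase (.neg φ))) (by
    intro ψ hψ
    simp only [Finset.coe_union, Set.mem_union, Finset.coe_erase, Set.mem_diff] at hψ
    rcases hψ with ⟨h, hne⟩ | ⟨h, hne⟩
    · rcases hT1 h with rfl | h'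
      · simp at hne
      · exact h'
    · rcases hT2 h with rfl | h'
      · simp at hne
      · exact h')
  by_cases hφ : peval v φ
  · obtain ⟨ψ, hψT, hnp⟩ := hv1 v
    refine hnp ?_
    by_cases he : ψ = φ
    · subst he; exact hφ
    · exact hv ψ (Finset.mem_union_left _ (Finset.mem_erase.2 ⟨he, hψT⟩))
  · obtain ⟨ψ, hψT, hnp⟩ := hv2 v
    refine hnp ?_
    by_cases he : ψ = Fml.neg φ
    · subst he; exact hφ
    · exact hv ψ (Finset.mem_union_right _ (Finset.mem_erase.2 ⟨he, hψT⟩))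

theorem finsat_mem_of_max {X : Set Fml} (hX : FinSat X)
    (hmax : ∀ Y, FinSat Y → X ⊆ Y → Y = X) (φ : Fml) :
    φ ∈ X ∨ Fml.neg φ ∈ X := by
  rcases finsat_insert hX φ with h | h
  · left
    have := hmax _ h (Set.subset_insert _ _)
    rw [← this]; exact Set.mem_insert _ _
  · right
    have := hmax _ h (Set.subset_insert _ _)
    rw [← this]; exact Set.mem_insert _ _

/-- main compactness theorem for propositional evaluation -/
theorem prop_compactness {S : Set Fml} (hq : ∀ φ ∈ S, φ.isQF) (hfs : FinSat S) :
    ∃ v : Val, ∀ φ ∈ S, peval v φ := by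
  -- Zorn's lemma to get a maximal finitely satisfiable extension
  have hzorn : ∃ m, S ⊆ m ∧ Maximal (fun X => X ∈ {X : Set Fml | FinSat X}) m := by
    refine zorn_subset_nonempty {X : Set Fml | FinSat X} ?_ S hfs
    intro c hc hchain hne
    refine ⟨⋃₀ c, ?_, fun s hs => Set.subset_sUnion_of_mem hs⟩
    intro T hT
    have : ∃ X ∈ c, ↑T ⊆ X := by
      classical
      induction T using Finset.induction with
      | empty => exact ⟨hne.choose, hne.choose_spec, by simp⟩
      | @insert ψ T' hx ih =>
          obtain ⟨X, hXc, hXT⟩ := ih (fun ρ hρ => hT (by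
            simp only [Finset.coe_insert, Set.mem_insert_iff]
            exact Or.inr hρ))
          have hψ : ψ ∈ ⋃₀ c := hT (by simp)
          obtain ⟨Y, hYc, hψY⟩ := hψ
          rcases hchain.total hXc hYc with hXY | hYX
          · refine ⟨Y, hYc, ?_⟩
            intro ρ hρ
            rcases Finset.mem_insert.1 (by exact_mod_cast hρ) with rfl | h
            · exact hψY
            · exact hXY (hXT h)
          · refine ⟨X, hXc, ?_⟩
            intro ρ hρ
            rcases Finset.mem_insert.1 (by exact_mod_cast hρ) with rfl | h
            · exact hYX hψY
            · exact hXT h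
    obtain ⟨X, hXc, hTX⟩ := this
    exact (hc hXc) T hTX
  obtain ⟨X, hSX, hXfs, hXmax⟩ := hzorn
  have hmax : ∀ Y, FinSat Y → X ⊆ Y → Y = X := by
    intro Y hY hXY
    exact Set.Subset.antisymm (hXmax hY hXY) hXY
  have hXfs' : FinSat X := hXfs
  have hnotboth : ∀ φ : Fml, φ ∈ X → Fml.neg φ ∈ X → False := by
    intro φ h1 h2
    obtain ⟨v, hv⟩ := hXfs' {φ, Fml.neg φ} (by
      intro ψ hψ
      rcases Finset.mem_insert.1 (by exact_mod_cast hψ) with rfl | h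
      · exact h1
      · rw [Finset.mem_singleton.1 h]; exact h2)
    exact (hv (Fml.neg φ) (by simp)) (hv φ (by simp))
  have hmem : ∀ φ : Fml, φ ∈ X ∨ Fml.neg φ ∈ X := finsat_mem_of_max hXfs' hmax
  set v : Val := fun p n ts => (Fml.atom p n ts) ∈ X with hvdef
  have main : ∀ φ : Fml, φ.isQF → (φ ∈ X → peval v φ) ∧ (Fml.neg φ ∈ X → ¬ peval v φ) := by
    intro φ
    induction φ with
    | tru =>
        intro _
        refine ⟨fun _ => trivial, fun hneg _ => ?_⟩
        obtain ⟨w, hw⟩ := hXfs' {Fml.neg .tru} (by simpa using hneg)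
        exact (hw (Fml.neg .tru) (by simp)) trivial
    | fls =>
        intro _
        refine ⟨fun hmem' => ?_, fun _ hf => hf⟩
        obtain ⟨w, hw⟩ := hXfs' {Fml.fls} (by simpa using hmem')
        exact (hw Fml.fls (by simp))
    | atom p n ts =>
        intro _
        refine ⟨fun h => h, fun hneg hpos => hnotboth _ hpos hneg⟩
    | neg φ ih =>
        intro hq'
        refine ⟨fun h => (ih hq').2 h, fun hneg hpev => ?_⟩
        rcases hmem φ with h | h
        · exact hpev ((ih hq').1 h)
        · exact hnotboth _ h hneg
    | conj φ ψ ih₁ ih₂ =>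
        intro hq'
        constructor
        · intro h
          have h1 : φ ∈ X := by
            rcases hmem φ with h' | h'
            · exact h'
            · exfalso
              obtain ⟨w, hw⟩ := hXfs' {Fml.conj φ ψ, Fml.neg φ} (by
                intro ρ hρ
                rcases Finset.mem_insert.1 (by exact_mod_cast hρ) with rfl | hρ''
                · exact h
                · rw [Finset.mem_singleton.1 hρ'']; exact h')
              exact (hw (Fml.neg φ) (by simp)) (hw (Fml.conj φ ψ) (by simp)).1
          have h2 : ψ ∈ X := by
            rcases hmem ψ with h' | h'
            · exact h'
            · exfalso
              obtain ⟨w, hw⟩ := hXfs' {Fml.conj φ ψ, Fml.neg ψ} (by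
                intro ρ hρ
                rcases Finset.mem_insert.1 (by exact_mod_cast hρ) with rfl | hρ''
                · exact h
                · rw [Finset.mem_singleton.1 hρ'']; exact h')
              exact (hw (Fml.neg ψ) (by simp)) (hw (Fml.conj φ ψ) (by simp)).2
          exact ⟨(ih₁ hq'.1).1 h1, (ih₂ hq'.2).1 h2⟩
        · rintro hneg ⟨hp1, hp2⟩
          rcases hmem φ with h1 | h1
          · rcases hmem ψ with h2 | h2
            · obtain ⟨w, hw⟩ := hXfs' {Fml.neg (Fml.conj φ ψ), φ, ψ} (by
                intro ρ hρ
                rcases Finset.mem_insert.1 (by exact_mod_cast hρ) with rfl | hρ''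
                · exact hneg
                · rcases Finset.mem_insert.1 hρ'' with rfl | hρ'''
                  · exact h1
                  · rw [Finset.mem_singleton.1 hρ''']; exact h2)
              exact (hw (Fml.neg (Fml.conj φ ψ)) (by simp))
                ⟨hw φ (by simp), hw ψ (by simp)⟩
            · exact (ih₂ hq'.2).2 h2 hp2
          · exact (ih₁ hq'.1).2 h1 hp1
    | disj φ ψ ih₁ ih₂ =>
        intro hq'
        constructor
        · intro h
          rcases hmem φ with h1 | h1
          · exact Or.inl ((ih₁ hq'.1).1 h1)
          · rcases hmem ψ with h2 | h2
            · exact Or.inr ((ih₂ hq'.2).1 h2)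
            · exfalso
              obtain ⟨w, hw⟩ := hXfs' {Fml.disj φ ψ, Fml.neg φ, Fml.neg ψ} (by
                intro ρ hρ
                rcases Finset.mem_insert.1 (by exact_mod_cast hρ) with rfl | hρ''
                · exact h
                · rcases Finset.mem_insert.1 hρ'' with rfl | hρ'''
                  · exact h1
                  · rw [Finset.mem_singleton.1 hρ''']; exact h2)
              rcases (hw (Fml.disj φ ψ) (by simp) : peval w (Fml.disj φ ψ)) with hp | hp
              · exact (hw (Fml.neg φ) (by simp)) hp
              · exact (hw (Fml.neg ψ) (by simp)) hp
        · rintro hneg hp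
          have h1 : Fml.neg φ ∈ X := by
            rcases hmem φ with h' | h'
            · exfalso
              obtain ⟨w, hw⟩ := hXfs' {Fml.neg (Fml.disj φ ψ), φ} (by
                intro ρ hρ
                rcases Finset.mem_insert.1 (by exact_mod_cast hρ) with rfl | hρ''
                · exact hneg
                · rw [Finset.mem_singleton.1 hρ'']; exact h')
              exact (hw (Fml.neg (Fml.disj φ ψ)) (by simp)) (Or.inl (hw φ (by simp)))
            · exact h'
          have h2 : Fml.neg ψ ∈ X := by
            rcases hmem ψ with h' | h'
            · exfalso
              obtain ⟨w, hw⟩ := hXfs' {Fml.neg (Fml.disj φ ψ), ψ} (by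
                intro ρ hρ
                rcases Finset.mem_insert.1 (by exact_mod_cast hρ) with rfl | hρ''
                · exact hneg
                · rw [Finset.mem_singleton.1 hρ'']; exact h')
              exact (hw (Fml.neg (Fml.disj φ ψ)) (by simp)) (Or.inr (hw ψ (by simp)))
            · exact h'
          rcases hp with hp | hp
          · exact (ih₁ hq'.1).2 h1 hp
          · exact (ih₂ hq'.2).2 h2 hp
    | all x φ ih => intro hq'; exact absurd hq' (by simp [Fml.isQF])
    | exi x φ ih => intro hq'; exact absurd hq' (by simp [Fml.isQF])
  exact ⟨v, fun φ hφ => (main φ (hq φ hφ)).1 (hSX hφ)⟩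

end CTIF
namespace CTIF
attribute [local instance] Classical.propDecidable

/-! ### Module 5: Skolemization -/

/-- Skolem term for counter `c` with universal variables `us` -/
def skTm (N : ℕ) (us : List ℕ) (c : ℕ) : Tm :=
  .app (N + c) us.length (fun i => .var (us.get i))

/-- Skolemization: polarity-sensitive quantifier elimination.
Fresh universal variables are numbered by the counter; Skolem functions are
`N + counter`. -/
def sk (N : ℕ) : Fml → Bool → Subst → List ℕ → ℕ → Fml × ℕ
  | .tru, _, _, _, c => (.tru, c)
  | .fls, _, _, _, c => (.fls, c)
  | .atom p n ts, _, ρ, _, c => (.atom p n (fun i => (ts i).subst ρ), c)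
  | .neg φ, pol, ρ, us, c =>
      let r := sk N φ (!pol) ρ us c
      (.neg r.1, r.2)
  | .conj φ ψ, pol, ρ, us, c =>
      let r₁ := sk N φ pol ρ us c
      let r₂ := sk N ψ pol ρ us r₁.2
      (.conj r₁.1 r₂.1, r₂.2)
  | .disj φ ψ, pol, ρ, us, c =>
      let r₁ := sk N φ pol ρ us c
      let r₂ := sk N ψ pol ρ us r₁.2
      (.disj r₁.1 r₂.1, r₂.2)
  | .all x φ, true, ρ, us, c => sk N φ true (Function.update ρ x (.var c)) (us ++ [c]) (c+1)
  | .all x φ, false, ρ, us, c => sk N φ false (Function.update ρ x (skTm N us c)) us (c+1)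
  | .exi x φ, true, ρ, us, c => sk N φ true (Function.update ρ x (skTm N us c)) us (c+1)
  | .exi x φ, false, ρ, us, c => sk N φ false (Function.update ρ x (.var c)) (us ++ [c]) (c+1)

theorem sk_mono (N : ℕ) (φ : Fml) : ∀ (pol : Bool) (ρ : Subst) (us : List ℕ) (c : ℕ),
    c ≤ (sk N φ pol ρ us c).2 := by
  induction φ with
  | tru => intro pol ρ us c; exact le_refl c
  | fls => intro pol ρ us c; exact le_refl c
  | atom p n ts => intro pol ρ us c; exact le_refl c
  | neg φ ih => intro pol ρ us c; exact ih (!pol) ρ us c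
  | conj φ ψ ih₁ ih₂ => intro pol ρ us c; exact (ih₁ pol ρ us c).trans (ih₂ pol ρ us _)
  | disj φ ψ ih₁ ih₂ => intro pol ρ us c; exact (ih₁ pol ρ us c).trans (ih₂ pol ρ us _)
  | all x φ ih =>
      intro pol ρ us c
      cases pol
      · exact (Nat.le_succ c).trans (ih false _ us (c+1))
      · exact (Nat.le_succ c).trans (ih true _ (us ++ [c]) (c+1))
  | exi x φ ih =>
      intro pol ρ us c
      cases pol
      · exact (Nat.le_succ c).trans (ih false _ (us ++ [c]) (c+1))
      · exact (Nat.le_succ c).trans (ih true _ us (c+1))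

theorem sk_isQF (N : ℕ) (φ : Fml) : ∀ (pol : Bool) (ρ : Subst) (us : List ℕ) (c : ℕ),
    (sk N φ pol ρ us c).1.isQF := by
  induction φ with
  | tru => intro pol ρ us c; trivial
  | fls => intro pol ρ us c; trivial
  | atom p n ts => intro pol ρ us c; trivial
  | neg φ ih => intro pol ρ us c; exact ih (!pol) ρ us c
  | conj φ ψ ih₁ ih₂ => intro pol ρ us c; exact ⟨ih₁ pol ρ us c, ih₂ pol ρ us _⟩
  | disj φ ψ ih₁ ih₂ => intro pol ρ us c; exact ⟨ih₁ pol ρ us c, ih₂ pol ρ us _⟩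
  | all x φ ih => intro pol ρ us c; cases pol <;> apply ih
  | exi x φ ih => intro pol ρ us c; cases pol <;> apply ih

theorem sk_preds (N : ℕ) (φ : Fml) : ∀ (pol : Bool) (ρ : Subst) (us : List ℕ) (c : ℕ)
    (b : Bool), (sk N φ pol ρ us c).1.preds b ⊆ φ.preds b := by
  induction φ with
  | tru => intro pol ρ us c b; exact subset_rfl
  | fls => intro pol ρ us c b; exact subset_rfl
  | atom p n ts => intro pol ρ us c b; exact subset_rfl
  | neg φ ih => intro pol ρ us c b; exact ih (!pol) ρ us c (!b)
  | conj φ ψ ih₁ ih₂ =>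
      intro pol ρ us c b
      exact Set.union_subset_union (ih₁ pol ρ us c b) (ih₂ pol ρ us _ b)
  | disj φ ψ ih₁ ih₂ =>
      intro pol ρ us c b
      exact Set.union_subset_union (ih₁ pol ρ us c b) (ih₂ pol ρ us _ b)
  | all x φ ih => intro pol ρ us c b; cases pol <;> apply ih
  | exi x φ ih => intro pol ρ us c b; cases pol <;> apply ih

theorem skTm_vars {N : ℕ} {us : List ℕ} {c : ℕ} {z : ℕ} (h : z ∈ (skTm N us c).vars) :
    z ∈ us := by
  simp only [skTm, Tm.vars, Set.mem_iUnion] at h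
  obtain ⟨i, hi⟩ := h
  simp only [Tm.vars, Set.mem_singleton_iff] at hi
  subst hi
  exact List.get_mem us ⟨i.1, i.2⟩

theorem skTm_funs {N : ℕ} {us : List ℕ} {c : ℕ} {q : ℕ × ℕ} (h : q ∈ (skTm N us c).funs) :
    q = (N + c, us.length) := by
  simp only [skTm, Tm.funs, Set.mem_insert_iff, Set.mem_iUnion] at h
  rcases h with h | ⟨i, hi⟩
  · exact h
  · exact absurd hi (by simp [Tm.vars, Tm.funs])

theorem sk_free (N : ℕ) (φ : Fml) : ∀ (pol : Bool) (ρ : Subst) (us : List ℕ) (c : ℕ),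
    (∀ y ∈ φ.free, ∀ z ∈ (ρ y).vars, z < c) → (∀ z ∈ us, z < c) →
    ∀ z ∈ (sk N φ pol ρ us c).1.free, z < (sk N φ pol ρ us c).2 := by
  induction φ with
  | tru => intro pol ρ us c _ _ z hz; exact absurd hz (by simp [sk, Fml.free])
  | fls => intro pol ρ us c _ _ z hz; exact absurd hz (by simp [sk, Fml.free])
  | atom p n ts =>
      intro pol ρ us c hρ _ z hz
      simp only [sk, Fml.free, Set.mem_iUnion] at hz
      obtain ⟨i, hi⟩ := hz
      obtain ⟨y, hy1, hy2⟩ := (tm_vars_subst ρ (ts i)).1 hi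
      exact hρ y (by simp only [Fml.free, Set.mem_iUnion]; exact ⟨i, hy1⟩) z hy2
  | neg φ ih => intro pol ρ us c hρ hus; exact ih (!pol) ρ us c hρ hus
  | conj φ ψ ih₁ ih₂ =>
      intro pol ρ us c hρ hus z hz
      have m1 := sk_mono N φ pol ρ us c
      have m2 := sk_mono N ψ pol ρ us (sk N φ pol ρ us c).2
      have hρ₁ : ∀ y ∈ φ.free, ∀ w ∈ (ρ y).vars, w < c :=
        fun y hy => hρ y (Or.inl hy)
      have hρ₂ : ∀ y ∈ ψ.free, ∀ w ∈ (ρ y).vars, w < (sk N φ pol ρ us c).2 :=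
        fun y hy w hw => lt_of_lt_of_le (hρ y (Or.inr hy) w hw) m1
      have hus₂ : ∀ w ∈ us, w < (sk N φ pol ρ us c).2 :=
        fun w hw => lt_of_lt_of_le (hus w hw) m1
      rcases hz with hz | hz
      · exact lt_of_lt_of_le (ih₁ pol ρ us c hρ₁ hus z hz) m2
      · exact ih₂ pol ρ us _ hρ₂ hus₂ z hz
  | disj φ ψ ih₁ ih₂ =>
      intro pol ρ us c hρ hus z hz
      have m1 := sk_mono N φ pol ρ us c
      have m2 := sk_mono N ψ pol ρ us (sk N φ pol ρ us c).2
      have hρ₁ : ∀ y ∈ φ.free, ∀ w ∈ (ρ y).vars, w < c :=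
        fun y hy => hρ y (Or.inl hy)
      have hρ₂ : ∀ y ∈ ψ.free, ∀ w ∈ (ρ y).vars, w < (sk N φ pol ρ us c).2 :=
        fun y hy w hw => lt_of_lt_of_le (hρ y (Or.inr hy) w hw) m1
      have hus₂ : ∀ w ∈ us, w < (sk N φ pol ρ us c).2 :=
        fun w hw => lt_of_lt_of_le (hus w hw) m1
      rcases hz with hz | hz
      · exact lt_of_lt_of_le (ih₁ pol ρ us c hρ₁ hus z hz) m2
      · exact ih₂ pol ρ us _ hρ₂ hus₂ z hz
  | all x φ ih =>
      intro pol ρ us c hρ hus z hz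
      cases pol
      · -- skolemized: ρ' = update ρ x (skTm N us c)
        refine ih false _ us (c+1) ?_ (fun w hw => (hus w hw).trans (Nat.lt_succ_self c)) z hz
        intro y hy w hw
        by_cases hxy : y = x
        · subst hxy
          rw [Function.update_self] at hw
          exact (hus w (skTm_vars hw)).trans (Nat.lt_succ_self c)
        · rw [Function.update_of_ne hxy] at hw
          exact (hρ y ⟨hy, hxy⟩ w hw).trans (Nat.lt_succ_self c)
      · -- universal: ρ' = update ρ x (var c), us' = us ++ [c]
        refine ih true _ (us ++ [c]) (c+1) ?_ ?_ z hz
        · intro y hy w hw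
          by_cases hxy : y = x
          · subst hxy
            rw [Function.update_self] at hw
            simp only [Tm.vars, Set.mem_singleton_iff] at hw
            omega
          · rw [Function.update_of_ne hxy] at hw
            exact (hρ y ⟨hy, hxy⟩ w hw).trans (Nat.lt_succ_self c)
        · intro w hw
          rcases List.mem_append.1 hw with hw | hw
          · exact (hus w hw).trans (Nat.lt_succ_self c)
          · rw [List.mem_singleton.1 hw]; exact Nat.lt_succ_self c
  | exi x φ ih =>
      intro pol ρ us c hρ hus z hz
      cases pol
      · refine ih false _ (us ++ [c]) (c+1) ?_ ?_ z hz
        · intro y hy w hw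
          by_cases hxy : y = x
          · subst hxy
            rw [Function.update_self] at hw
            simp only [Tm.vars, Set.mem_singleton_iff] at hw
            omega
          · rw [Function.update_of_ne hxy] at hw
            exact (hρ y ⟨hy, hxy⟩ w hw).trans (Nat.lt_succ_self c)
        · intro w hw
          rcases List.mem_append.1 hw with hw | hw
          · exact (hus w hw).trans (Nat.lt_succ_self c)
          · rw [List.mem_singleton.1 hw]; exact Nat.lt_succ_self c
      · refine ih true _ us (c+1) ?_ (fun w hw => (hus w hw).trans (Nat.lt_succ_self c)) z hz
        intro y hy w hw
        by_cases hxy : y = x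
        · subst hxy
          rw [Function.update_self] at hw
          exact (hus w (skTm_vars hw)).trans (Nat.lt_succ_self c)
        · rw [Function.update_of_ne hxy] at hw
          exact (hρ y ⟨hy, hxy⟩ w hw).trans (Nat.lt_succ_self c)

theorem sk_funs (N : ℕ) (φ : Fml) : ∀ (pol : Bool) (ρ : Subst) (us : List ℕ) (c : ℕ),
    ∀ q ∈ (sk N φ pol ρ us c).1.funs,
      q ∈ φ.funs ∨ (∃ y ∈ φ.free, q ∈ (ρ y).funs) ∨
        (N + c ≤ q.1 ∧ q.1 < N + (sk N φ pol ρ us c).2) := by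
  induction φ with
  | tru => intro pol ρ us c q hq; exact absurd hq (by simp [sk, Fml.funs])
  | fls => intro pol ρ us c q hq; exact absurd hq (by simp [sk, Fml.funs])
  | atom p n ts =>
      intro pol ρ us c q hq
      simp only [sk, Fml.funs, Set.mem_iUnion] at hq
      obtain ⟨i, hi⟩ := hq
      rcases (tm_funs_subst ρ (ts i)).1 hi with h | ⟨y, hy1, hy2⟩
      · exact Or.inl (by simp only [Fml.funs, Set.mem_iUnion]; exact ⟨i, h⟩)
      · exact Or.inr (Or.inl ⟨y, by simp only [Fml.free, Set.mem_iUnion]; exact ⟨i, hy1⟩, hy2⟩)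
  | neg φ ih => intro pol ρ us c; exact ih (!pol) ρ us c
  | conj φ ψ ih₁ ih₂ =>
      intro pol ρ us c q hq
      have m1 := sk_mono N φ pol ρ us c
      have m2 := sk_mono N ψ pol ρ us (sk N φ pol ρ us c).2
      rcases hq with hq | hq
      · rcases ih₁ pol ρ us c q hq with h | ⟨y, hy1, hy2⟩ | ⟨h1, h2⟩
        · exact Or.inl (Or.inl h)
        · exact Or.inr (Or.inl ⟨y, Or.inl hy1, hy2⟩)
        · refine Or.inr (Or.inr ⟨h1, ?_⟩)
          have hr : (sk N (Fml.conj φ ψ) pol ρ us c).2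
              = (sk N ψ pol ρ us (sk N φ pol ρ us c).2).2 := rfl
          omega
      · rcases ih₂ pol ρ us _ q hq with h | ⟨y, hy1, hy2⟩ | ⟨h1, h2⟩
        · exact Or.inl (Or.inr h)
        · exact Or.inr (Or.inl ⟨y, Or.inr hy1, hy2⟩)
        · refine Or.inr (Or.inr ⟨by omega, ?_⟩)
          have hr : (sk N (Fml.conj φ ψ) pol ρ us c).2
              = (sk N ψ pol ρ us (sk N φ pol ρ us c).2).2 := rfl
          omega
  | disj φ ψ ih₁ ih₂ =>
      intro pol ρ us c q hq
      have m1 := sk_mono N φ pol ρ us c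
      have m2 := sk_mono N ψ pol ρ us (sk N φ pol ρ us c).2
      rcases hq with hq | hq
      · rcases ih₁ pol ρ us c q hq with h | ⟨y, hy1, hy2⟩ | ⟨h1, h2⟩
        · exact Or.inl (Or.inl h)
        · exact Or.inr (Or.inl ⟨y, Or.inl hy1, hy2⟩)
        · refine Or.inr (Or.inr ⟨h1, ?_⟩)
          have hr : (sk N (Fml.disj φ ψ) pol ρ us c).2
              = (sk N ψ pol ρ us (sk N φ pol ρ us c).2).2 := rfl
          omega
      · rcases ih₂ pol ρ us _ q hq with h | ⟨y, hy1, hy2⟩ | ⟨h1, h2⟩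
        · exact Or.inl (Or.inr h)
        · exact Or.inr (Or.inl ⟨y, Or.inr hy1, hy2⟩)
        · refine Or.inr (Or.inr ⟨by omega, ?_⟩)
          have hr : (sk N (Fml.disj φ ψ) pol ρ us c).2
              = (sk N ψ pol ρ us (sk N φ pol ρ us c).2).2 := rfl
          omega
  | all x φ ih =>
      intro pol ρ us c q hq
      cases pol
      · have m := sk_mono N φ false (Function.update ρ x (skTm N us c)) us (c+1)
        have hr : (sk N (Fml.all x φ) false ρ us c).2
            = (sk N φ false (Function.update ρ x (skTm N us c)) us (c+1)).2 := rfl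
        rcases ih false _ us (c+1) q hq with h | ⟨y, hy1, hy2⟩ | ⟨h1, h2⟩
        · exact Or.inl h
        · by_cases hxy : y = x
          · subst hxy
            rw [Function.update_self] at hy2
            have hq1 : q.1 = N + c := by rw [skTm_funs hy2]
            exact Or.inr (Or.inr ⟨by omega, by omega⟩)
          · rw [Function.update_of_ne hxy] at hy2
            exact Or.inr (Or.inl ⟨y, ⟨hy1, hxy⟩, hy2⟩)
        · exact Or.inr (Or.inr ⟨by omega, by omega⟩)
      · have m := sk_mono N φ true (Function.update ρ x (.var c)) (us ++ [c]) (c+1)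
        have hr : (sk N (Fml.all x φ) true ρ us c).2
            = (sk N φ true (Function.update ρ x (Tm.var c)) (us ++ [c]) (c+1)).2 := rfl
        rcases ih true _ (us ++ [c]) (c+1) q hq with h | ⟨y, hy1, hy2⟩ | ⟨h1, h2⟩
        · exact Or.inl h
        · by_cases hxy : y = x
          · subst hxy
            rw [Function.update_self] at hy2
            exact absurd hy2 (by simp [Tm.funs])
          · rw [Function.update_of_ne hxy] at hy2
            exact Or.inr (Or.inl ⟨y, ⟨hy1, hxy⟩, hy2⟩)
        · exact Or.inr (Or.inr ⟨by omega, by omega⟩)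
  | exi x φ ih =>
      intro pol ρ us c q hq
      cases pol
      · have m := sk_mono N φ false (Function.update ρ x (.var c)) (us ++ [c]) (c+1)
        have hr : (sk N (Fml.exi x φ) false ρ us c).2
            = (sk N φ false (Function.update ρ x (Tm.var c)) (us ++ [c]) (c+1)).2 := rfl
        rcases ih false _ (us ++ [c]) (c+1) q hq with h | ⟨y, hy1, hy2⟩ | ⟨h1, h2⟩
        · exact Or.inl h
        · by_cases hxy : y = x
          · subst hxy
            rw [Function.update_self] at hy2
            exact absurd hy2 (by simp [Tm.funs])
          · rw [Function.update_of_ne hxy] at hy2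
            exact Or.inr (Or.inl ⟨y, ⟨hy1, hxy⟩, hy2⟩)
        · exact Or.inr (Or.inr ⟨by omega, by omega⟩)
      · have m := sk_mono N φ true (Function.update ρ x (skTm N us c)) us (c+1)
        have hr : (sk N (Fml.exi x φ) true ρ us c).2
            = (sk N φ true (Function.update ρ x (skTm N us c)) us (c+1)).2 := rfl
        rcases ih true _ us (c+1) q hq with h | ⟨y, hy1, hy2⟩ | ⟨h1, h2⟩
        · exact Or.inl h
        · by_cases hxy : y = x
          · subst hxy
            rw [Function.update_self] at hy2
            have hq1 : q.1 = N + c := by rw [skTm_funs hy2]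
            exact Or.inr (Or.inr ⟨by omega, by omega⟩)
          · rw [Function.update_of_ne hxy] at hy2
            exact Or.inr (Or.inl ⟨y, ⟨hy1, hxy⟩, hy2⟩)
        · exact Or.inr (Or.inr ⟨by omega, by omega⟩)

end CTIF
namespace CTIF
attribute [local instance] Classical.propDecidable

/-- Soundness direction 2: a model of all instances of the skolemized formula
satisfies the original (for positive polarity); dually for negative polarity. -/
theorem sk_sound₂ {D : Type} (M : Struc D) (N : ℕ) (φ : Fml) :
    ∀ (pol : Bool) (ρ : Subst) (us : List ℕ) (c : ℕ),
    (∀ y ∈ φ.free, ∀ z ∈ (ρ y).vars, z < c) →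
    (∀ z ∈ us, z < c) →
    ∀ a : ℕ → D,
    (pol = true →
      (∀ a' : ℕ → D, (∀ z, z < c → a' z = a z) → (sk N φ pol ρ us c).1.sat M a') →
        φ.sat M (fun x => (ρ x).eval M a)) ∧
    (pol = false → φ.sat M (fun x => (ρ x).eval M a) →
        ∃ a', (∀ z, z < c → a' z = a z) ∧ (sk N φ pol ρ us c).1.sat M a') := by
  induction φ with
  | tru =>
      intro pol ρ us c _ _ a
      exact ⟨fun _ _ => trivial, fun _ _ => ⟨a, fun _ _ => rfl, trivial⟩⟩
  | fls =>
      intro pol ρ us c _ _ a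
      refine ⟨fun _ hyp => ?_, fun _ hf => absurd hf id⟩
      exact (hyp a (fun _ _ => rfl))
  | atom p n ts =>
      intro pol ρ us c _ _ a
      have hiff : ∀ a' : ℕ → D, (sk N (Fml.atom p n ts) pol ρ us c).1.sat M a' ↔
          M.pr p n (fun i => (ts i).eval M (fun x => (ρ x).eval M a')) := by
        intro a'
        show M.pr p n (fun i => ((ts i).subst ρ).eval M a') ↔ _
        have harg : (fun i => ((ts i).subst ρ).eval M a')
            = fun i => (ts i).eval M (fun x => (ρ x).eval M a') :=
          funext fun i => tm_eval_subst M a' ρ (ts i)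
        rw [harg]
      constructor
      · intro _ hyp
        exact (hiff a).1 (hyp a (fun _ _ => rfl))
      · intro _ hsat
        exact ⟨a, fun _ _ => rfl, (hiff a).2 hsat⟩
  | neg φ ih =>
      intro pol ρ us c hρ hus a
      constructor
      · rintro rfl hyp
        intro hsat
        obtain ⟨a', ha', hs⟩ := (ih false ρ us c hρ hus a).2 rfl hsat
        exact (hyp a' ha') hs
      · rintro rfl hsat
        by_contra hcon
        push_neg at hcon
        have : ∀ a', (∀ z, z < c → a' z = a z) → (sk N φ true ρ us c).1.sat M a' := by
          intro a' ha'
          by_contra hs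
          exact (hcon a' ha') hs
        exact hsat ((ih true ρ us c hρ hus a).1 rfl this)
  | conj φ ψ ih₁ ih₂ =>
      intro pol ρ us c hρ hus a
      have m1 := sk_mono N φ pol ρ us c
      have hρ₁ : ∀ y ∈ φ.free, ∀ z ∈ (ρ y).vars, z < c := fun y hy => hρ y (Or.inl hy)
      have hρ₂c : ∀ y ∈ ψ.free, ∀ z ∈ (ρ y).vars, z < (sk N φ pol ρ us c).2 :=
        fun y hy z hz => lt_of_lt_of_le (hρ y (Or.inr hy) z hz) m1
      have hus₂ : ∀ z ∈ us, z < (sk N φ pol ρ us c).2 :=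
        fun z hz => lt_of_lt_of_le (hus z hz) m1
      constructor
      · rintro rfl hyp
        constructor
        · refine (ih₁ true ρ us c hρ₁ hus a).1 rfl ?_
          intro a' ha'
          exact (hyp a' ha').1
        · refine (ih₂ true ρ us _ hρ₂c hus₂ a).1 rfl ?_
          intro a' ha'
          exact (hyp a' (fun z hz => ha' z (lt_of_lt_of_le hz m1))).2
      · rintro rfl ⟨hs1, hs2⟩
        obtain ⟨a₁, ha₁, hsk₁⟩ := (ih₁ false ρ us c hρ₁ hus a).2 rfl hs1
        -- re-evaluate ψ's context at a₁ : same on relevant vars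
        have hs2' : ψ.sat M (fun x => (ρ x).eval M a₁) := by
          rw [sat_congr ψ rfl (fun q _ => rfl) (a' := fun x => (ρ x).eval M a)]
          · exact hs2
          · intro y hy
            exact tm_eval_congr (ρ y) (fun q _ => rfl)
              (fun z hz => ha₁ z (hρ y (Or.inr hy) z hz))
        obtain ⟨a₂, ha₂, hsk₂⟩ := (ih₂ false ρ us _ hρ₂c hus₂ a₁).2 rfl hs2'
        refine ⟨a₂, ?_, ?_, hsk₂⟩
        · intro z hz
          rw [ha₂ z (lt_of_lt_of_le hz m1), ha₁ z hz]
        · -- transfer satisfaction of the first skolemized conjunct from a₁ to a₂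
          rw [sat_congr (sk N φ false ρ us c).1 rfl (fun q _ => rfl) (a' := a₁)]
          · exact hsk₁
          · intro z hz
            exact ha₂ z (sk_free N φ false ρ us c hρ₁ hus z hz)
  | disj φ ψ ih₁ ih₂ =>
      intro pol ρ us c hρ hus a
      have m1 := sk_mono N φ pol ρ us c
      have hρ₁ : ∀ y ∈ φ.free, ∀ z ∈ (ρ y).vars, z < c := fun y hy => hρ y (Or.inl hy)
      have hρ₂c : ∀ y ∈ ψ.free, ∀ z ∈ (ρ y).vars, z < (sk N φ pol ρ us c).2 :=
        fun y hy z hz => lt_of_lt_of_le (hρ y (Or.inr hy) z hz) m1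
      have hus₂ : ∀ z ∈ us, z < (sk N φ pol ρ us c).2 :=
        fun z hz => lt_of_lt_of_le (hus z hz) m1
      constructor
      · rintro rfl hyp
        by_cases h1 : φ.sat M (fun x => (ρ x).eval M a)
        · exact Or.inl h1
        · -- obtain a counter-assignment for the first disjunct
          have hnall : ¬ ∀ a', (∀ z, z < c → a' z = a z) →
              (sk N φ true ρ us c).1.sat M a' := by
            intro hall
            exact h1 ((ih₁ true ρ us c hρ₁ hus a).1 rfl hall)
          push_neg at hnall
          obtain ⟨a₁, ha₁, hns₁⟩ := hnall
          refine Or.inr ?_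
          have hres := (ih₂ true ρ us _ hρ₂c hus₂ a₁).1 rfl ?_
          · rw [sat_congr ψ rfl (fun q _ => rfl)
                (a' := fun x => (ρ x).eval M a₁)]
            · exact hres
            · intro y hy
              exact tm_eval_congr (ρ y) (fun q _ => rfl)
                (fun z hz => (ha₁ z (hρ y (Or.inr hy) z hz)).symm)
          · intro a' ha'
            have ha'c : ∀ z, z < c → a' z = a z := by
              intro z hz
              rw [ha' z (lt_of_lt_of_le hz m1), ha₁ z hz]
            rcases hyp a' ha'c with hs | hs
            · exfalso
              refine hns₁ ?_
              rw [sat_congr (sk N φ true ρ us c).1 rfl (fun q _ => rfl) (a' := a')]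
              · exact hs
              · intro z hz
                exact (ha' z (sk_free N φ true ρ us c hρ₁ hus z hz)).symm
            · exact hs
      · rintro rfl hsat
        rcases hsat with hs | hs
        · obtain ⟨a₁, ha₁, hsk₁⟩ := (ih₁ false ρ us c hρ₁ hus a).2 rfl hs
          exact ⟨a₁, ha₁, Or.inl hsk₁⟩
        · have hs' : ψ.sat M (fun x => (ρ x).eval M a) := hs
          obtain ⟨a₂, ha₂, hsk₂⟩ := (ih₂ false ρ us _ hρ₂c hus₂ a).2 rfl hs'
          exact ⟨a₂, fun z hz => ha₂ z (lt_of_lt_of_le hz m1), Or.inr hsk₂⟩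
  | all x φ ih =>
      intro pol ρ us c hρ hus a
      constructor
      · rintro rfl hyp
        intro d
        set a_d := Function.update a c d with ha_d
        have hρ' : ∀ y ∈ φ.free, ∀ z ∈ ((Function.update ρ x (Tm.var c)) y).vars, z < c+1 := by
          intro y hy z hz
          by_cases hxy : y = x
          · subst hxy
            rw [Function.update_self] at hz
            simp only [Tm.vars, Set.mem_singleton_iff] at hz
            omega
          · rw [Function.update_of_ne hxy] at hz
            exact (hρ y ⟨hy, hxy⟩ z hz).trans (Nat.lt_succ_self c)
        have hus' : ∀ z ∈ us ++ [c], z < c + 1 := by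
          intro z hz
          rcases List.mem_append.1 hz with hz | hz
          · exact (hus z hz).trans (Nat.lt_succ_self c)
          · rw [List.mem_singleton.1 hz]; omega
        have hres := (ih true _ (us ++ [c]) (c+1) hρ' hus' a_d).1 rfl ?_
        · rw [sat_congr φ rfl (fun q _ => rfl)
            (a' := fun y => ((Function.update ρ x (Tm.var c)) y).eval M a_d)]
          · exact hres
          · intro y hy
            by_cases hxy : y = x
            · subst hxy
              rw [Function.update_self, Function.update_self]
              show d = a_d c
              rw [ha_d, Function.update_self]
            · rw [Function.update_of_ne hxy, Function.update_of_ne hxy]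
              exact tm_eval_congr (ρ y) (fun q _ => rfl) (fun z hz => by
                rw [ha_d, Function.update_of_ne]
                intro he
                subst he
                exact absurd (hρ y ⟨hy, hxy⟩ z hz) (lt_irrefl _))
        · intro a' ha'
          refine hyp a' ?_
          intro z hz
          rw [ha' z (by omega), ha_d, Function.update_of_ne (by omega)]
      · rintro rfl hsat
        -- skolemized universal in negative polarity
        set t := skTm N us c with ht
        have hρ' : ∀ y ∈ φ.free, ∀ z ∈ ((Function.update ρ x t) y).vars, z < c+1 := by
          intro y hy z hz
          by_cases hxy : y = x
          · subst hxy
            rw [Function.update_self] at hz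
            exact (hus z (skTm_vars hz)).trans (Nat.lt_succ_self c)
          · rw [Function.update_of_ne hxy] at hz
            exact (hρ y ⟨hy, hxy⟩ z hz).trans (Nat.lt_succ_self c)
        have hus' : ∀ z ∈ us, z < c + 1 := fun z hz => (hus z hz).trans (Nat.lt_succ_self c)
        have hinst := hsat (t.eval M a)
        have hsat' : φ.sat M (fun y => ((Function.update ρ x t) y).eval M a) := by
          rw [sat_congr φ rfl (fun q _ => rfl)
            (a' := Function.update (fun y => (ρ y).eval M a) x (t.eval M a))]
          · exact hinst
          · intro y hy
            by_cases hxy : y = x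
            · subst hxy
              rw [Function.update_self, Function.update_self]
            · rw [Function.update_of_ne hxy, Function.update_of_ne hxy]
        obtain ⟨a', ha', hsk⟩ := (ih false _ us (c+1) hρ' hus' a).2 rfl hsat'
        exact ⟨a', fun z hz => ha' z (by omega), hsk⟩
  | exi x φ ih =>
      intro pol ρ us c hρ hus a
      constructor
      · rintro rfl hyp
        set t := skTm N us c with ht
        have hρ' : ∀ y ∈ φ.free, ∀ z ∈ ((Function.update ρ x t) y).vars, z < c+1 := by
          intro y hy z hz
          by_cases hxy : y = x
          · subst hxy
            rw [Function.update_self] at hz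
            exact (hus z (skTm_vars hz)).trans (Nat.lt_succ_self c)
          · rw [Function.update_of_ne hxy] at hz
            exact (hρ y ⟨hy, hxy⟩ z hz).trans (Nat.lt_succ_self c)
        have hus' : ∀ z ∈ us, z < c + 1 := fun z hz => (hus z hz).trans (Nat.lt_succ_self c)
        have hres := (ih true _ us (c+1) hρ' hus' a).1 rfl ?_
        · refine ⟨t.eval M a, ?_⟩
          rw [sat_congr φ rfl (fun q _ => rfl)
            (a' := fun y => ((Function.update ρ x t) y).eval M a)]
          · exact hres
          · intro y hy
            by_cases hxy : y = x
            · subst hxy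
              rw [Function.update_self, Function.update_self]
            · rw [Function.update_of_ne hxy, Function.update_of_ne hxy]
        · intro a' ha'
          exact hyp a' (fun z hz => ha' z (by omega))
      · rintro rfl hsat
        obtain ⟨d, hd⟩ := hsat
        set a_d := Function.update a c d with ha_d
        have hρ' : ∀ y ∈ φ.free, ∀ z ∈ ((Function.update ρ x (Tm.var c)) y).vars, z < c+1 := by
          intro y hy z hz
          by_cases hxy : y = x
          · subst hxy
            rw [Function.update_self] at hz
            simp only [Tm.vars, Set.mem_singleton_iff] at hz
            omega
          · rw [Function.update_of_ne hxy] at hz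
            exact (hρ y ⟨hy, hxy⟩ z hz).trans (Nat.lt_succ_self c)
        have hus' : ∀ z ∈ us ++ [c], z < c + 1 := by
          intro z hz
          rcases List.mem_append.1 hz with hz | hz
          · exact (hus z hz).trans (Nat.lt_succ_self c)
          · rw [List.mem_singleton.1 hz]; omega
        have hsat' : φ.sat M (fun y => ((Function.update ρ x (Tm.var c)) y).eval M a_d) := by
          rw [sat_congr φ rfl (fun q _ => rfl)
            (a' := Function.update (fun y => (ρ y).eval M a) x d)]
          · exact hd
          · intro y hy
            by_cases hxy : y = x
            · subst hxy
              rw [Function.update_self, Function.update_self]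
              show a_d c = d
              rw [ha_d, Function.update_self]
            · rw [Function.update_of_ne hxy, Function.update_of_ne hxy]
              exact tm_eval_congr (ρ y) (fun q _ => rfl) (fun z hz => by
                rw [ha_d, Function.update_of_ne]
                intro he
                subst he
                exact absurd (hρ y ⟨hy, hxy⟩ z hz) (lt_irrefl _))
        obtain ⟨a', ha', hsk⟩ := (ih false _ (us ++ [c]) (c+1) hρ' hus' a_d).2 rfl hsat'
        refine ⟨a', ?_, hsk⟩
        intro z hz
        rw [ha' z (by omega), ha_d, Function.update_of_ne (by omega)]

end CTIF
namespace CTIF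
attribute [local instance] Classical.propDecidable

/-- Soundness direction 1: choice of Skolem function interpretations. -/
theorem sk_sound₁ {D : Type} (M : Struc D) (d₀ : D) (N : ℕ) (φ : Fml) :
    ∀ (pol : Bool) (ρ : Subst) (us : List ℕ) (c : ℕ)
      (E : ℕ → (n : ℕ) → (Fin n → D) → D),
      (∀ q ∈ φ.funs, q.1 < N) →
      (∀ y ∈ φ.free, ∀ q ∈ (ρ y).funs, q.1 < N + c) →
      (∀ y ∈ φ.free, ∀ z ∈ (ρ y).vars, z ∈ us) →
      ∃ E' : ℕ → (n : ℕ) → (Fin n → D) → D,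
        (∀ f, f < N + c → E' f = E f) ∧
        ∀ M' : Struc D, M'.pr = M.pr →
          (∀ f, f < N → M'.fn f = M.fn f) →
          (∀ f, N ≤ f → f < N + (sk N φ pol ρ us c).2 → M'.fn f = E' f) →
          ∀ a : ℕ → D,
            (pol = true → φ.sat M' (fun x => (ρ x).eval M' a) →
              (sk N φ pol ρ us c).1.sat M' a) ∧
            (pol = false → (sk N φ pol ρ us c).1.sat M' a →
              φ.sat M' (fun x => (ρ x).eval M' a)) := by
  induction φ with
  | tru =>
      intro pol ρ us c E _ _ _
      exact ⟨E, fun _ _ => rfl, fun M' _ _ _ a =>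
        ⟨fun _ _ => trivial, fun _ _ => trivial⟩⟩
  | fls =>
      intro pol ρ us c E _ _ _
      exact ⟨E, fun _ _ => rfl, fun M' _ _ _ a => ⟨fun _ h => h, fun _ h => h.elim⟩⟩
  | atom p n ts =>
      intro pol ρ us c E _ _ _
      refine ⟨E, fun _ _ => rfl, ?_⟩
      intro M' _ _ _ a
      have hiff : (sk N (Fml.atom p n ts) pol ρ us c).1.sat M' a ↔
          M'.pr p n (fun i => (ts i).eval M' (fun x => (ρ x).eval M' a)) := by
        show M'.pr p n (fun i => ((ts i).subst ρ).eval M' a) ↔ _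
        have harg : (fun i => ((ts i).subst ρ).eval M' a)
            = fun i => (ts i).eval M' (fun x => (ρ x).eval M' a) :=
          funext fun i => tm_eval_subst M' a ρ (ts i)
        rw [harg]
      exact ⟨fun _ h => hiff.2 h, fun _ h => hiff.1 h⟩
  | neg φ ih =>
      intro pol ρ us c E hN hρf hρv
      obtain ⟨E', hext, P⟩ := ih (!pol) ρ us c E hN hρf hρv
      refine ⟨E', hext, ?_⟩
      intro M' h1 h2 h3 a
      have hP := P M' h1 h2 h3 a
      constructor
      · rintro rfl hsat hsk
        exact hsat (hP.2 rfl hsk)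
      · rintro rfl hsk hsat
        exact hsk (hP.1 rfl hsat)
  | conj φ ψ ih₁ ih₂ =>
      intro pol ρ us c E hN hρf hρv
      have m1 := sk_mono N φ pol ρ us c
      have m2 := sk_mono N ψ pol ρ us (sk N φ pol ρ us c).2
      obtain ⟨E₁, hext₁, P₁⟩ := ih₁ pol ρ us c E
        (fun q hq => hN q (Or.inl hq)) (fun y hy => hρf y (Or.inl hy))
        (fun y hy => hρv y (Or.inl hy))
      obtain ⟨E₂, hext₂, P₂⟩ := ih₂ pol ρ us (sk N φ pol ρ us c).2 E₁
        (fun q hq => hN q (Or.inr hq))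
        (fun y hy q hq => lt_of_lt_of_le (hρf y (Or.inr hy) q hq) (by omega))
        (fun y hy => hρv y (Or.inr hy))
      have hr : (sk N (Fml.conj φ ψ) pol ρ us c).2
          = (sk N ψ pol ρ us (sk N φ pol ρ us c).2).2 := rfl
      refine ⟨E₂, ?_, ?_⟩
      · intro f hf
        rw [hext₂ f (by omega), hext₁ f hf]
      · intro M' h1 h2 h3 a
        have h3₁ : ∀ f, N ≤ f → f < N + (sk N φ pol ρ us c).2 → M'.fn f = E₁ f := by
          intro f hf1 hf2
          rw [h3 f hf1 (by omega), hext₂ f hf2]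
        have h3₂ : ∀ f, N ≤ f → f < N + (sk N ψ pol ρ us (sk N φ pol ρ us c).2).2 →
            M'.fn f = E₂ f := by
          intro f hf1 hf2
          exact h3 f hf1 (by omega)
        have hP₁ := P₁ M' h1 h2 h3₁ a
        have hP₂ := P₂ M' h1 h2 h3₂ a
        constructor
        · rintro rfl ⟨hs1, hs2⟩
          exact ⟨hP₁.1 rfl hs1, hP₂.1 rfl hs2⟩
        · rintro rfl ⟨hs1, hs2⟩
          exact ⟨hP₁.2 rfl hs1, hP₂.2 rfl hs2⟩
  | disj φ ψ ih₁ ih₂ =>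
      intro pol ρ us c E hN hρf hρv
      have m1 := sk_mono N φ pol ρ us c
      have m2 := sk_mono N ψ pol ρ us (sk N φ pol ρ us c).2
      obtain ⟨E₁, hext₁, P₁⟩ := ih₁ pol ρ us c E
        (fun q hq => hN q (Or.inl hq)) (fun y hy => hρf y (Or.inl hy))
        (fun y hy => hρv y (Or.inl hy))
      obtain ⟨E₂, hext₂, P₂⟩ := ih₂ pol ρ us (sk N φ pol ρ us c).2 E₁
        (fun q hq => hN q (Or.inr hq))
        (fun y hy q hq => lt_of_lt_of_le (hρf y (Or.inr hy) q hq) (by omega))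
        (fun y hy => hρv y (Or.inr hy))
      have hr : (sk N (Fml.disj φ ψ) pol ρ us c).2
          = (sk N ψ pol ρ us (sk N φ pol ρ us c).2).2 := rfl
      refine ⟨E₂, ?_, ?_⟩
      · intro f hf
        rw [hext₂ f (by omega), hext₁ f hf]
      · intro M' h1 h2 h3 a
        have h3₁ : ∀ f, N ≤ f → f < N + (sk N φ pol ρ us c).2 → M'.fn f = E₁ f := by
          intro f hf1 hf2
          rw [h3 f hf1 (by omega), hext₂ f hf2]
        have h3₂ : ∀ f, N ≤ f → f < N + (sk N ψ pol ρ us (sk N φ pol ρ us c).2).2 →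
            M'.fn f = E₂ f := by
          intro f hf1 hf2
          exact h3 f hf1 (by omega)
        have hP₁ := P₁ M' h1 h2 h3₁ a
        have hP₂ := P₂ M' h1 h2 h3₂ a
        constructor
        · rintro rfl hs
          rcases hs with hs | hs
          exacts [Or.inl (hP₁.1 rfl hs), Or.inr (hP₂.1 rfl hs)]
        · rintro rfl hs
          rcases hs with hs | hs
          exacts [Or.inl (hP₁.2 rfl hs), Or.inr (hP₂.2 rfl hs)]
  | all x φ ih =>
      intro pol ρ us c E hN hρf hρv
      cases pol
      · -- negative polarity: Skolemize the universal quantifier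
        set M_E : Struc D := ⟨fun f => if N ≤ f then E f else M.fn f, M.pr⟩ with hME
        set recon : (n : ℕ) → (Fin n → D) → ℕ → D := fun n dv z =>
          if h : z ∈ us ∧ us.idxOf z < n then dv ⟨us.idxOf z, h.2⟩ else d₀ with hrecon
        set fn₀ : (n : ℕ) → (Fin n → D) → D := fun n dv =>
          if hex : ∃ d, ¬ φ.sat M_E
              (Function.update (fun y => (ρ y).eval M_E (recon n dv)) x d)
          then hex.choose else d₀ with hfn₀
        set E'' : ℕ → (n : ℕ) → (Fin n → D) → D :=
          fun f => if f = N + c then fn₀ else E f with hE''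
        have hρf' : ∀ y ∈ φ.free, ∀ q ∈ ((Function.update ρ x (skTm N us c)) y).funs,
            q.1 < N + (c+1) := by
          intro y hy q hq
          by_cases hxy : y = x
          · subst hxy
            rw [Function.update_self] at hq
            rw [skTm_funs hq]
            omega
          · rw [Function.update_of_ne hxy] at hq
            exact lt_of_lt_of_le (hρf y ⟨hy, hxy⟩ q hq) (by omega)
        have hρv' : ∀ y ∈ φ.free, ∀ z ∈ ((Function.update ρ x (skTm N us c)) y).vars,
            z ∈ us := by
          intro y hy z hz
          by_cases hxy : y = x
          · subst hxy
            rw [Function.update_self] at hz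
            exact skTm_vars hz
          · rw [Function.update_of_ne hxy] at hz
            exact hρv y ⟨hy, hxy⟩ z hz
        obtain ⟨E₁, hext₁, P₁⟩ := ih false (Function.update ρ x (skTm N us c)) us (c+1) E''
          hN hρf' hρv'
        have m := sk_mono N φ false (Function.update ρ x (skTm N us c)) us (c+1)
        have hr : (sk N (Fml.all x φ) false ρ us c)
            = sk N φ false (Function.update ρ x (skTm N us c)) us (c+1) := rfl
        refine ⟨E₁, ?_, ?_⟩
        · intro f hf
          rw [hext₁ f (by omega)]
          exact if_neg (by omega)
        · intro M' h1 h2 h3 a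
          refine ⟨(fun h => nomatch h), ?_⟩
          intro _ hsk
          -- the essential values
          set dv : Fin us.length → D := fun i => a (us.get i) with hdv
          set bE : ℕ → D := fun y => (ρ y).eval M_E (recon us.length dv) with hbE
          set b : ℕ → D := fun y => (ρ y).eval M' a with hb
          -- agreement of M' and M_E on old symbols, and of assignments
          have hfn_agree : ∀ q : ℕ × ℕ, q.1 < N + c → M'.fn q.1 q.2 = M_E.fn q.1 q.2 := by
            intro q hq
            by_cases hqN : q.1 < N
            · have e2 : M_E.fn q.1 = M.fn q.1 := if_neg (by omega)
              rw [h2 q.1 hqN, e2]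
            · have hNle : N ≤ q.1 := by omega
              have e1 : E'' q.1 = E q.1 := if_neg (by omega)
              have e2 : M_E.fn q.1 = E q.1 := if_pos hNle
              rw [h3 q.1 hNle (by rw [hr]; omega), hext₁ q.1 (by omega), e1, e2]
          have htrans : ∀ y ∈ φ.free, y ≠ x → b y = bE y := by
            intro y hy hxy
            rw [hb, hbE]
            refine tm_eval_congr (ρ y) ?_ ?_
            · intro q hq
              exact hfn_agree q (hρf y ⟨hy, hxy⟩ q hq)
            · intro z hz
              have hzus : z ∈ us := hρv y ⟨hy, hxy⟩ z hz
              have hidx : us.idxOf z < us.length := List.idxOf_lt_length_iff.2 hzus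
              have e1 : recon us.length dv z = dv ⟨us.idxOf z, hidx⟩ :=
                dif_pos ⟨hzus, hidx⟩
              have e2 : dv ⟨us.idxOf z, hidx⟩ = a z := by
                show a (us.get ⟨us.idxOf z, hidx⟩) = a z
                rw [List.idxOf_get hidx]
              rw [e1, e2]
          have htr : ∀ d : D, φ.sat M' (Function.update b x d) ↔
              φ.sat M_E (Function.update bE x d) := by
            intro d
            refine sat_congr φ h1 ?_ ?_
            · intro q hq
              have hqN : q.1 < N := hN q hq
              have e2 : M_E.fn q.1 = M.fn q.1 := if_neg (by omega)
              rw [h2 q.1 hqN, e2]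
            · intro y hy
              by_cases hxy : y = x
              · subst hxy
                rw [Function.update_self, Function.update_self]
              · rw [Function.update_of_ne hxy, Function.update_of_ne hxy]
                exact htrans y hy hxy
          -- the Skolem value
          have hval : (skTm N us c).eval M' a = fn₀ us.length dv := by
            show M'.fn (N + c) us.length (fun i => a (us.get i)) = fn₀ us.length dv
            have e1 : E'' (N + c) = fn₀ := if_pos rfl
            rw [h3 (N+c) (by omega) (by rw [hr]; omega), hext₁ (N+c) (by omega), e1]
          -- main argument
          show ∀ d, φ.sat M' (Function.update b x d)
          by_contra hcon
          push_neg at hcon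
          obtain ⟨d₁, hd₁⟩ := hcon
          have hex : ∃ d, ¬ φ.sat M_E
              (Function.update (fun y => (ρ y).eval M_E (recon us.length dv)) x d) :=
            ⟨d₁, fun hs => hd₁ ((htr d₁).2 hs)⟩
          have hspec := hex.choose_spec
          have hchoose : fn₀ us.length dv = hex.choose := dif_pos hex
          -- from the skolemized formula
          have hres := (P₁ M' h1 h2 (by intro f hf1 hf2; exact h3 f hf1 (by rw [hr]; exact hf2)) a).2
            rfl hsk
          have heq : (fun y => ((Function.update ρ x (skTm N us c)) y).eval M' a)
              = Function.update b x (fn₀ us.length dv) := by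
            funext y
            by_cases hxy : y = x
            · subst hxy
              rw [Function.update_self, Function.update_self, hval]
            · rw [Function.update_of_ne hxy, Function.update_of_ne hxy]
          rw [heq] at hres
          rw [hchoose] at hres
          exact hspec ((htr hex.choose).1 hres)
      · -- positive polarity: universal variable
        have hρf' : ∀ y ∈ φ.free, ∀ q ∈ ((Function.update ρ x (Tm.var c)) y).funs,
            q.1 < N + (c+1) := by
          intro y hy q hq
          by_cases hxy : y = x
          · subst hxy
            rw [Function.update_self] at hq
            exact absurd hq (by simp [Tm.funs])
          · rw [Function.update_of_ne hxy] at hq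
            exact lt_of_lt_of_le (hρf y ⟨hy, hxy⟩ q hq) (by omega)
        have hρv' : ∀ y ∈ φ.free, ∀ z ∈ ((Function.update ρ x (Tm.var c)) y).vars,
            z ∈ us ++ [c] := by
          intro y hy z hz
          by_cases hxy : y = x
          · subst hxy
            rw [Function.update_self] at hz
            simp only [Tm.vars, Set.mem_singleton_iff] at hz
            subst hz
            exact List.mem_append.2 (Or.inr (by simp))
          · rw [Function.update_of_ne hxy] at hz
            exact List.mem_append.2 (Or.inl (hρv y ⟨hy, hxy⟩ z hz))
        obtain ⟨E₁, hext₁, P₁⟩ := ih true (Function.update ρ x (Tm.var c)) (us ++ [c]) (c+1) E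
          hN hρf' hρv'
        have hr : (sk N (Fml.all x φ) true ρ us c)
            = sk N φ true (Function.update ρ x (Tm.var c)) (us ++ [c]) (c+1) := rfl
        refine ⟨E₁, fun f hf => hext₁ f (by omega), ?_⟩
        intro M' h1 h2 h3 a
        refine ⟨?_, (fun h => nomatch h)⟩
        intro _ hsat
        have heq : (fun y => ((Function.update ρ x (Tm.var c)) y).eval M' a)
            = Function.update (fun y => (ρ y).eval M' a) x (a c) := by
          funext y
          by_cases hxy : y = x
          · subst hxy
            rw [Function.update_self, Function.update_self]
            rfl
          · rw [Function.update_of_ne hxy, Function.update_of_ne hxy]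
        have := (P₁ M' h1 h2 (by intro f hf1 hf2; exact h3 f hf1 (by rw [hr]; exact hf2)) a).1 rfl
        rw [heq] at this
        exact this (hsat (a c))
  | exi x φ ih =>
      intro pol ρ us c E hN hρf hρv
      cases pol
      · -- negative polarity: universal variable
        have hρf' : ∀ y ∈ φ.free, ∀ q ∈ ((Function.update ρ x (Tm.var c)) y).funs,
            q.1 < N + (c+1) := by
          intro y hy q hq
          by_cases hxy : y = x
          · subst hxy
            rw [Function.update_self] at hq
            exact absurd hq (by simp [Tm.funs])
          · rw [Function.update_of_ne hxy] at hq
            exact lt_of_lt_of_le (hρf y ⟨hy, hxy⟩ q hq) (by omega)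
        have hρv' : ∀ y ∈ φ.free, ∀ z ∈ ((Function.update ρ x (Tm.var c)) y).vars,
            z ∈ us ++ [c] := by
          intro y hy z hz
          by_cases hxy : y = x
          · subst hxy
            rw [Function.update_self] at hz
            simp only [Tm.vars, Set.mem_singleton_iff] at hz
            subst hz
            exact List.mem_append.2 (Or.inr (by simp))
          · rw [Function.update_of_ne hxy] at hz
            exact List.mem_append.2 (Or.inl (hρv y ⟨hy, hxy⟩ z hz))
        obtain ⟨E₁, hext₁, P₁⟩ := ih false (Function.update ρ x (Tm.var c)) (us ++ [c]) (c+1) E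
          hN hρf' hρv'
        have hr : (sk N (Fml.exi x φ) false ρ us c)
            = sk N φ false (Function.update ρ x (Tm.var c)) (us ++ [c]) (c+1) := rfl
        refine ⟨E₁, fun f hf => hext₁ f (by omega), ?_⟩
        intro M' h1 h2 h3 a
        refine ⟨(fun h => nomatch h), ?_⟩
        intro _ hsk
        have heq : (fun y => ((Function.update ρ x (Tm.var c)) y).eval M' a)
            = Function.update (fun y => (ρ y).eval M' a) x (a c) := by
          funext y
          by_cases hxy : y = x
          · subst hxy
            rw [Function.update_self, Function.update_self]
            rfl
          · rw [Function.update_of_ne hxy, Function.update_of_ne hxy]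
        have := (P₁ M' h1 h2 (by intro f hf1 hf2; exact h3 f hf1 (by rw [hr]; exact hf2)) a).2 rfl hsk
        rw [heq] at this
        exact ⟨a c, this⟩
      · -- positive polarity: Skolemize the existential quantifier
        set M_E : Struc D := ⟨fun f => if N ≤ f then E f else M.fn f, M.pr⟩ with hME
        set recon : (n : ℕ) → (Fin n → D) → ℕ → D := fun n dv z =>
          if h : z ∈ us ∧ us.idxOf z < n then dv ⟨us.idxOf z, h.2⟩ else d₀ with hrecon
        set fn₀ : (n : ℕ) → (Fin n → D) → D := fun n dv =>
          if hex : ∃ d, φ.sat M_E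
              (Function.update (fun y => (ρ y).eval M_E (recon n dv)) x d)
          then hex.choose else d₀ with hfn₀
        set E'' : ℕ → (n : ℕ) → (Fin n → D) → D :=
          fun f => if f = N + c then fn₀ else E f with hE''
        have hρf' : ∀ y ∈ φ.free, ∀ q ∈ ((Function.update ρ x (skTm N us c)) y).funs,
            q.1 < N + (c+1) := by
          intro y hy q hq
          by_cases hxy : y = x
          · subst hxy
            rw [Function.update_self] at hq
            rw [skTm_funs hq]
            omega
          · rw [Function.update_of_ne hxy] at hq
            exact lt_of_lt_of_le (hρf y ⟨hy, hxy⟩ q hq) (by omega)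
        have hρv' : ∀ y ∈ φ.free, ∀ z ∈ ((Function.update ρ x (skTm N us c)) y).vars,
            z ∈ us := by
          intro y hy z hz
          by_cases hxy : y = x
          · subst hxy
            rw [Function.update_self] at hz
            exact skTm_vars hz
          · rw [Function.update_of_ne hxy] at hz
            exact hρv y ⟨hy, hxy⟩ z hz
        obtain ⟨E₁, hext₁, P₁⟩ := ih true (Function.update ρ x (skTm N us c)) us (c+1) E''
          hN hρf' hρv'
        have m := sk_mono N φ true (Function.update ρ x (skTm N us c)) us (c+1)
        have hr : (sk N (Fml.exi x φ) true ρ us c)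
            = sk N φ true (Function.update ρ x (skTm N us c)) us (c+1) := rfl
        refine ⟨E₁, ?_, ?_⟩
        · intro f hf
          rw [hext₁ f (by omega)]
          exact if_neg (by omega)
        · intro M' h1 h2 h3 a
          refine ⟨?_, (fun h => nomatch h)⟩
          intro _ hsat
          set dv : Fin us.length → D := fun i => a (us.get i) with hdv
          set bE : ℕ → D := fun y => (ρ y).eval M_E (recon us.length dv) with hbE
          set b : ℕ → D := fun y => (ρ y).eval M' a with hb
          have hfn_agree : ∀ q : ℕ × ℕ, q.1 < N + c → M'.fn q.1 q.2 = M_E.fn q.1 q.2 := by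
            intro q hq
            by_cases hqN : q.1 < N
            · have e2 : M_E.fn q.1 = M.fn q.1 := if_neg (by omega)
              rw [h2 q.1 hqN, e2]
            · have hNle : N ≤ q.1 := by omega
              have e1 : E'' q.1 = E q.1 := if_neg (by omega)
              have e2 : M_E.fn q.1 = E q.1 := if_pos hNle
              rw [h3 q.1 hNle (by rw [hr]; omega), hext₁ q.1 (by omega), e1, e2]
          have htrans : ∀ y ∈ φ.free, y ≠ x → b y = bE y := by
            intro y hy hxy
            rw [hb, hbE]
            refine tm_eval_congr (ρ y) ?_ ?_
            · intro q hq
              exact hfn_agree q (hρf y ⟨hy, hxy⟩ q hq)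
            · intro z hz
              have hzus : z ∈ us := hρv y ⟨hy, hxy⟩ z hz
              have hidx : us.idxOf z < us.length := List.idxOf_lt_length_iff.2 hzus
              have e1 : recon us.length dv z = dv ⟨us.idxOf z, hidx⟩ :=
                dif_pos ⟨hzus, hidx⟩
              have e2 : dv ⟨us.idxOf z, hidx⟩ = a z := by
                show a (us.get ⟨us.idxOf z, hidx⟩) = a z
                rw [List.idxOf_get hidx]
              rw [e1, e2]
          have htr : ∀ d : D, φ.sat M' (Function.update b x d) ↔
              φ.sat M_E (Function.update bE x d) := by
            intro d
            refine sat_congr φ h1 ?_ ?_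
            · intro q hq
              have hqN : q.1 < N := hN q hq
              have e2 : M_E.fn q.1 = M.fn q.1 := if_neg (by omega)
              rw [h2 q.1 hqN, e2]
            · intro y hy
              by_cases hxy : y = x
              · subst hxy
                rw [Function.update_self, Function.update_self]
              · rw [Function.update_of_ne hxy, Function.update_of_ne hxy]
                exact htrans y hy hxy
          have hval : (skTm N us c).eval M' a = fn₀ us.length dv := by
            show M'.fn (N + c) us.length (fun i => a (us.get i)) = fn₀ us.length dv
            have e1 : E'' (N + c) = fn₀ := if_pos rfl
            rw [h3 (N+c) (by omega) (by rw [hr]; omega), hext₁ (N+c) (by omega), e1]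
          obtain ⟨d₁, hd₁⟩ := hsat
          have hex : ∃ d, φ.sat M_E
              (Function.update (fun y => (ρ y).eval M_E (recon us.length dv)) x d) :=
            ⟨d₁, (htr d₁).1 hd₁⟩
          have hspec := hex.choose_spec
          have hchoose : fn₀ us.length dv = hex.choose := dif_pos hex
          have hsat' : φ.sat M' (Function.update b x (fn₀ us.length dv)) := by
            rw [hchoose]
            exact (htr hex.choose).2 hspec
          have heq : (fun y => ((Function.update ρ x (skTm N us c)) y).eval M' a)
              = Function.update b x (fn₀ us.length dv) := by
            funext y
            by_cases hxy : y = x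
            · subst hxy
              rw [Function.update_self, Function.update_self, hval]
            · rw [Function.update_of_ne hxy, Function.update_of_ne hxy]
          have hres := (P₁ M' h1 h2
            (by intro f hf1 hf2; exact h3 f hf1 (by rw [hr]; exact hf2)) a).1 rfl
          rw [heq] at hres
          exact hres hsat'

end CTIF
namespace CTIF
attribute [local instance] Classical.propDecidable

/-! ### Module 6: Herbrand term structures -/

/-- Herbrand domain: ground terms built from the signature `Sig` -/
def HD (Sig : Set (ℕ × ℕ)) : Type := {t : Tm // t.builtFrom Sig}

noncomputable def herbStruc (Sig : Set (ℕ × ℕ)) (t₀ : Tm) (ht₀ : t₀.builtFrom Sig)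
    (v : Val) : Struc (HD Sig) where
  fn := fun f n ds =>
    if h : (f, n) ∈ Sig then ⟨Tm.app f n (fun i => (ds i).1), h, fun i => (ds i).2⟩
    else ⟨t₀, ht₀⟩
  pr := fun p n ds => v p n (fun i => (ds i).1)

theorem herb_eval {Sig : Set (ℕ × ℕ)} {t₀ : Tm} {ht₀ : t₀.builtFrom Sig} {v : Val}
    (t : Tm) (hf : ∀ q ∈ t.funs, q ∈ Sig) (a : ℕ → HD Sig) :
    (t.eval (herbStruc Sig t₀ ht₀ v) a).1 = t.subst (fun x => (a x).1) := by
  induction t with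
  | var x => rfl
  | app f n ts ih =>
      have hmem : (f, n) ∈ Sig := hf (f, n) (by simp [Tm.funs])
      show ((herbStruc Sig t₀ ht₀ v).fn f n (fun i => (ts i).eval _ a)).1 = _
      have : (herbStruc Sig t₀ ht₀ v).fn f n (fun i => (ts i).eval _ a)
          = ⟨Tm.app f n (fun i => ((ts i).eval (herbStruc Sig t₀ ht₀ v) a).1),
              hmem, fun i => ((ts i).eval (herbStruc Sig t₀ ht₀ v) a).2⟩ :=
        dif_pos hmem
      rw [this]
      show Tm.app f n _ = Tm.app f n _
      congr 1
      funext i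
      exact ih i (fun q hq => hf q (by
        simp only [Tm.funs, Set.mem_insert_iff, Set.mem_iUnion]
        exact Or.inr ⟨i, hq⟩))

theorem herb_sat {Sig : Set (ℕ × ℕ)} {t₀ : Tm} {ht₀ : t₀.builtFrom Sig} {v : Val}
    (φ : Fml) (hq : φ.isQF) (hf : ∀ q ∈ φ.funs, q ∈ Sig) (a : ℕ → HD Sig) :
    φ.sat (herbStruc Sig t₀ ht₀ v) a ↔ peval v (φ.subst (fun x => (a x).1)) := by
  induction φ with
  | tru => exact Iff.rfl
  | fls => exact Iff.rfl
  | atom p n ts =>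
      show v p n (fun i => ((ts i).eval _ a).1) ↔ v p n (fun i => (ts i).subst _)
      have : (fun i => ((ts i).eval (herbStruc Sig t₀ ht₀ v) a).1)
          = fun i => (ts i).subst (fun x => (a x).1) := by
        funext i
        exact herb_eval (ts i) (fun q hq' => hf q (by
          simp only [Fml.funs, Set.mem_iUnion]
          exact ⟨i, hq'⟩)) a
      rw [this]
  | neg φ ih => exact not_congr (ih hq hf)
  | conj φ ψ ih₁ ih₂ =>
      exact and_congr (ih₁ hq.1 (fun q hq' => hf q (Or.inl hq')))
        (ih₂ hq.2 (fun q hq' => hf q (Or.inr hq')))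
  | disj φ ψ ih₁ ih₂ =>
      exact or_congr (ih₁ hq.1 (fun q hq' => hf q (Or.inl hq')))
        (ih₂ hq.2 (fun q hq' => hf q (Or.inr hq')))
  | all x φ ih => exact absurd hq (by simp [Fml.isQF])
  | exi x φ ih => exact absurd hq (by simp [Fml.isQF])

theorem getD_mem_or_default {α : Type} (L : List α) (i : ℕ) (d : α) :
    L.getD i d ∈ L ∨ L.getD i d = d := by
  by_cases h : i < L.length
  · rw [List.getD_eq_getElem (l := L) (d := d) h]
    exact Or.inl (List.getElem_mem h)
  · exact Or.inr (List.getD_eq_default L d (by omega))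

theorem mem_getD {α : Type} {L : List α} {x : α} (h : x ∈ L) (d : α) :
    ∃ i, i < L.length ∧ L.getD i d = x := by
  obtain ⟨n, hn⟩ := List.mem_iff_get.1 h
  exact ⟨n.1, n.2, by rw [List.getD_eq_get (l := L) (d := d) n]; rw [← hn]⟩

end CTIF
namespace CTIF
attribute [local instance] Classical.propDecidable

/-- Existence of an interpolant lifting base. If `F` and `G` are
first-order sentences without equality with F ⊨ G, then there exists an interpolant
lifting base whose first two components are `F` and `G`. -/
theorem statement10 (F G : Fml) (hF : F.isSentence) (hG : G.isSentence)
    (h : entails F G) :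
    ∃ (FS GS : Set (ℕ × ℕ)) (Hg Fe Ge : Fml) (θ : Subst),
      IsLiftBase F G FS GS Hg Fe Ge θ := by
  classical
  have hFfree : F.free = ∅ := hF
  have hGfree : G.free = ∅ := hG
  -- fresh symbol bound
  obtain ⟨N, hN⟩ := exists_funs_bound (F.funs ∪ G.funs)
    ((fml_funs_finite F).union (fml_funs_finite G))
  have hNF : ∀ q ∈ F.funs, q.1 < N := fun q hq => hN q (Or.inl hq)
  have hNG : ∀ q ∈ G.funs, q.1 < N := fun q hq => hN q (Or.inr hq)
  -- Skolemizations
  set FeRaw : Fml := (sk N F true Tm.var [] 0).1 with hFeRaw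
  set cF : ℕ := (sk N F true Tm.var [] 0).2 with hcF
  set N' : ℕ := N + cF with hN'
  set GeRaw : Fml := (sk N' (Fml.neg G) true Tm.var [] 0).1 with hGeRaw
  set cG : ℕ := (sk N' (Fml.neg G) true Tm.var [] 0).2 with hcG
  set c₀ : ℕ := N' + cG with hc₀
  set t₀ : Tm := Tm.app c₀ 0 (fun i => i.elim0) with ht₀def
  set Sig : Set (ℕ × ℕ) := insert (c₀, 0) (FeRaw.funs ∪ GeRaw.funs) with hSig
  have ht₀ : t₀.builtFrom Sig := ⟨Set.mem_insert _ _, fun i => i.elim0⟩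
  have hqFeRaw : FeRaw.isQF := sk_isQF N F true Tm.var [] 0
  have hqGeRaw : GeRaw.isQF := sk_isQF N' (Fml.neg G) true Tm.var [] 0
  have hFeSig : ∀ q ∈ FeRaw.funs, q ∈ Sig := fun q hq => Set.mem_insert_of_mem _ (Or.inl hq)
  have hGeSig : ∀ q ∈ GeRaw.funs, q ∈ Sig := fun q hq => Set.mem_insert_of_mem _ (Or.inr hq)
  -- function symbol bounds for the Skolemizations
  have hfunsFeRaw : ∀ q ∈ FeRaw.funs, q ∈ F.funs ∨ (N ≤ q.1 ∧ q.1 < N') := by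
    intro q hq
    rcases sk_funs N F true Tm.var [] 0 q hq with h' | ⟨y, hy, _⟩ | ⟨h1, h2⟩
    · exact Or.inl h'
    · rw [hFfree] at hy; exact absurd hy (Set.notMem_empty y)
    · exact Or.inr ⟨by omega, by omega⟩
  have hfunsGeRaw : ∀ q ∈ GeRaw.funs, q ∈ G.funs ∨ (N' ≤ q.1 ∧ q.1 < N' + cG) := by
    intro q hq
    rcases sk_funs N' (Fml.neg G) true Tm.var [] 0 q hq with h' | ⟨y, hy, _⟩ | ⟨h1, h2⟩
    · exact Or.inl h'
    · have : (Fml.neg G).free = ∅ := hGfree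
      rw [this] at hy; exact absurd hy (Set.notMem_empty y)
    · exact Or.inr ⟨by omega, by omega⟩
  -- the instance set
  set SS : Set Fml :=
    {χ | ∃ σ : Subst, (∀ x, (σ x).builtFrom Sig) ∧ χ = FeRaw.subst σ} ∪
    {χ | ∃ σ : Subst, (∀ x, (σ x).builtFrom Sig) ∧ χ = GeRaw.subst σ} with hSS
  have hqSS : ∀ φ ∈ SS, φ.isQF := by
    rintro φ (⟨σ, _, rfl⟩ | ⟨σ, _, rfl⟩)
    exacts [fml_isQF_subst σ _ hqFeRaw, fml_isQF_subst σ _ hqGeRaw]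
  -- SS is propositionally unsatisfiable
  have hSSunsat : ¬ ∃ v : Val, ∀ φ ∈ SS, peval v φ := by
    rintro ⟨v, hv⟩
    set M_H := herbStruc Sig t₀ ht₀ v with hM_H
    have hFe_all : ∀ a, FeRaw.sat M_H a := by
      intro a
      rw [herb_sat FeRaw hqFeRaw hFeSig a]
      exact hv _ (Or.inl ⟨fun x => (a x).1, fun x => (a x).2, rfl⟩)
    have hGe_all : ∀ a, GeRaw.sat M_H a := by
      intro a
      rw [herb_sat GeRaw hqGeRaw hGeSig a]
      exact hv _ (Or.inr ⟨fun x => (a x).1, fun x => (a x).2, rfl⟩)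
    have hFsat : ∀ a, F.sat M_H a := by
      intro a
      have := (sk_sound₂ M_H N F true Tm.var [] 0
        (by rw [hFfree]; intro y hy; exact absurd hy (Set.notMem_empty y))
        (by intro z hz; exact absurd hz List.not_mem_nil) a).1 rfl
        (fun a' _ => hFe_all a')
      exact this
    have hnGsat : ∀ a, (Fml.neg G).sat M_H a := by
      intro a
      have := (sk_sound₂ M_H N' (Fml.neg G) true Tm.var [] 0
        (by show ∀ y ∈ (Fml.neg G).free, _
            have : (Fml.neg G).free = ∅ := hGfree
            rw [this]; intro y hy; exact absurd hy (Set.notMem_empty y))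
        (by intro z hz; exact absurd hz List.not_mem_nil) a).1 rfl
        (fun a' _ => hGe_all a')
      exact this
    have hne : Nonempty (HD Sig) := ⟨⟨t₀, ht₀⟩⟩
    set a₀ : ℕ → HD Sig := fun _ => ⟨t₀, ht₀⟩ with ha₀
    exact (hnGsat a₀) (h (HD Sig) hne M_H a₀ (hFsat a₀))
  -- compactness: finite unsatisfiable subset
  have hnfs : ¬ FinSat SS := fun hfs => hSSunsat (prop_compactness hqSS hfs)
  rw [FinSat] at hnfs
  push_neg at hnfs
  obtain ⟨T, hTsub, hTuns⟩ := hnfs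
  -- extract lists of substitutions
  set cσ : Subst := fun _ => t₀ with hcσ
  have hcσb : ∀ x, (cσ x).builtFrom Sig := fun _ => ht₀
  set isFi : Fml → Prop :=
    fun χ => ∃ σ : Subst, (∀ x, (σ x).builtFrom Sig) ∧ χ = FeRaw.subst σ with hisFi
  set isGi : Fml → Prop :=
    fun χ => ∃ σ : Subst, (∀ x, (σ x).builtFrom Sig) ∧ χ = GeRaw.subst σ with hisGi
  set σof : Fml → Subst := fun χ => if h : isFi χ then h.choose else cσ with hσof
  set τof : Fml → Subst := fun χ => if h : isGi χ then h.choose else cσ with hτof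
  set Fσs : List Subst := cσ :: ((T.toList.filter (fun χ => decide (isFi χ))).map σof)
    with hFσs
  set Gτs : List Subst := cσ :: ((T.toList.filter (fun χ => decide (¬ isFi χ))).map τof)
    with hGτs
  have hFσsb : ∀ σ ∈ Fσs, ∀ x, (σ x).builtFrom Sig := by
    intro σ hσ
    rcases List.mem_cons.1 hσ with rfl | hσ
    · exact hcσb
    · obtain ⟨χ, hχ, rfl⟩ := List.mem_map.1 hσ
      have hχF : isFi χ := of_decide_eq_true (List.mem_filter.1 hχ).2
      rw [hσof]
      simp only []
      rw [dif_pos hχF]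
      exact hχF.choose_spec.1
  have hGτsb : ∀ σ ∈ Gτs, ∀ x, (σ x).builtFrom Sig := by
    intro σ hσ
    rcases List.mem_cons.1 hσ with rfl | hσ
    · exact hcσb
    · obtain ⟨χ, hχ, rfl⟩ := List.mem_map.1 hσ
      have hmem : χ ∈ T := by
        have := (List.mem_filter.1 hχ).1
        exact Finset.mem_toList.1 this
      have hnF : ¬ isFi χ := of_decide_eq_true (List.mem_filter.1 hχ).2
      have hχG : isGi χ := by
        rcases hTsub (by exact_mod_cast hmem) with h' | h'
        · exact absurd h' hnF
        · exact h'
      rw [hτof]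
      simp only []
      rw [dif_pos hχG]
      exact hχG.choose_spec.1
  -- the propositional core: conjunction of F-instances entails disjunction of G-negations
  have hkey : ∀ v : Val, (∀ σ ∈ Fσs, peval v (FeRaw.subst σ)) →
      ∃ τ ∈ Gτs, ¬ peval v (GeRaw.subst τ) := by
    intro v hvF
    obtain ⟨χ, hχT, hχnp⟩ := hTuns v
    by_cases hχF : isFi χ
    · exfalso
      have hσmem : σof χ ∈ Fσs := by
        refine List.mem_cons_of_mem _ (List.mem_map_of_mem ?_)
        exact List.mem_filter.2 ⟨Finset.mem_toList.2 hχT, decide_eq_true hχF⟩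
      have : χ = FeRaw.subst (σof χ) := by
        rw [hσof]
        simp only []
        rw [dif_pos hχF]
        exact hχF.choose_spec.2
      rw [this] at hχnp
      exact hχnp (hvF _ hσmem)
    · have hχG : isGi χ := by
        rcases hTsub (by exact_mod_cast hχT) with h' | h'
        · exact absurd h' hχF
        · exact h'
      have hτmem : τof χ ∈ Gτs := by
        refine List.mem_cons_of_mem _ (List.mem_map_of_mem ?_)
        exact List.mem_filter.2 ⟨Finset.mem_toList.2 hχT, decide_eq_true hχF⟩
      have : χ = GeRaw.subst (τof χ) := by
        rw [hτof]
        simp only []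
        rw [dif_pos hχG]
        exact hχG.choose_spec.2
      rw [this] at hχnp
      exact ⟨τof χ, hτmem, hχnp⟩
  -- variable renaming and the substitution θ
  set m : ℕ := Fσs.length with hm
  set l : ℕ := Gτs.length with hl
  have hm1 : 0 < m := by rw [hm, hFσs]; simp
  have hl1 : 0 < l := by rw [hl, hGτs]; simp
  set ρF : ℕ → Subst := fun i y => Tm.var (Nat.pair (2*i) y) with hρF
  set ρG : ℕ → Subst := fun j y => Tm.var (Nat.pair (2*j+1) y) with hρG
  set Fe : Fml := conjList ((List.range m).map (fun i => FeRaw.subst (ρF i))) with hFe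
  set Ge : Fml := disjList ((List.range l).map (fun j => (Fml.neg GeRaw).subst (ρG j)))
    with hGe
  set dec : ℕ → Tm := fun z =>
    if (Nat.unpair z).1 % 2 = 0 then (Fσs.getD ((Nat.unpair z).1 / 2) cσ) (Nat.unpair z).2
    else (Gτs.getD ((Nat.unpair z).1 / 2) cσ) (Nat.unpair z).2 with hdec
  have hdecb : ∀ z, (dec z).builtFrom Sig := by
    intro z
    rw [hdec]
    simp only []
    by_cases hpar : (Nat.unpair z).1 % 2 = 0
    · rw [if_pos hpar]
      rcases getD_mem_or_default Fσs ((Nat.unpair z).1 / 2) cσ with h' | h'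
      · exact hFσsb _ h' _
      · rw [h']; exact hcσb (Nat.unpair z).2
    · rw [if_neg hpar]
      rcases getD_mem_or_default Gτs ((Nat.unpair z).1 / 2) cσ with h' | h'
      · exact hGτsb _ h' _
      · rw [h']; exact hcσb (Nat.unpair z).2
  set θ : Subst := fun z => if z ∈ Fe.free ∪ Ge.free then dec z else Tm.var z with hθ
  have hθgate : ∀ z ∈ Fe.free ∪ Ge.free, θ z = dec z := by
    intro z hz
    rw [hθ]
    simp only []
    rw [if_pos hz]
  have hθgate' : ∀ z, z ∉ Fe.free ∪ Ge.free → θ z = Tm.var z := by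
    intro z hz
    rw [hθ]
    simp only []
    rw [if_neg hz]
  have hqFe : Fe.isQF := by
    rw [hFe]
    refine conjList_isQF ?_
    intro ψ hψ
    obtain ⟨i, _, rfl⟩ := List.mem_map.1 hψ
    exact fml_isQF_subst _ _ hqFeRaw
  have hqGe : Ge.isQF := by
    rw [hGe]
    refine disjList_isQF ?_
    intro ψ hψ
    obtain ⟨j, _, rfl⟩ := List.mem_map.1 hψ
    exact fml_isQF_subst _ _ hqGeRaw
  -- evaluation of θ on the encoded variables
  have hθF : ∀ i, i < m → ∀ y ∈ FeRaw.free, θ (Nat.pair (2*i) y) = (Fσs.getD i cσ) y := by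
    intro i him y hy
    have hzin : Nat.pair (2*i) y ∈ Fe.free := by
      refine conjList_free_sup (List.mem_map_of_mem (List.mem_range.2 him)) ?_
      rw [fml_free_subst_qf (ρF i) FeRaw hqFeRaw]
      exact ⟨y, hy, by rw [hρF]; simp [Tm.vars]⟩
    rw [hθgate _ (Or.inl hzin), hdec]
    simp only [Nat.unpair_pair]
    rw [if_pos (by omega)]
    have hdiv : 2*i/2 = i := by omega
    rw [hdiv]
  have hθG : ∀ j, j < l → ∀ y ∈ GeRaw.free, θ (Nat.pair (2*j+1) y) = (Gτs.getD j cσ) y := by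
    intro j hjl y hy
    have hzin : Nat.pair (2*j+1) y ∈ Ge.free := by
      refine disjList_free_sup (List.mem_map_of_mem (List.mem_range.2 hjl)) ?_
      show Nat.pair (2*j+1) y ∈ (Fml.neg (GeRaw.subst (ρG j))).free
      show Nat.pair (2*j+1) y ∈ (GeRaw.subst (ρG j)).free
      rw [fml_free_subst_qf (ρG j) GeRaw hqGeRaw]
      exact ⟨y, hy, by rw [hρG]; simp [Tm.vars]⟩
    rw [hθgate _ (Or.inr hzin), hdec]
    simp only [Nat.unpair_pair]
    rw [if_neg (by omega)]
    have hdiv : (2*j+1)/2 = j := by omega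
    rw [hdiv]
  -- the ground formulas
  set A : Fml := Fe.subst θ with hA
  set B : Fml := Ge.subst θ with hB
  have hAeq : A = conjList ((List.range m).map (fun i => FeRaw.subst (Fσs.getD i cσ))) := by
    rw [hA, hFe, subst_conjList, List.map_map]
    congr 1
    refine List.map_congr_left ?_
    intro i him
    have him' := List.mem_range.1 him
    show (FeRaw.subst (ρF i)).subst θ = _
    rw [fml_subst_comp_qf (ρF i) θ FeRaw hqFeRaw]
    refine fml_subst_congr_qf FeRaw hqFeRaw ?_
    intro y hy
    show ((ρF i) y).subst θ = _
    rw [hρF]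
    show θ (Nat.pair (2*i) y) = _
    exact hθF i him' y hy
  have hBeq : B = disjList ((List.range l).map
      (fun j => Fml.neg (GeRaw.subst (Gτs.getD j cσ)))) := by
    rw [hB, hGe, subst_disjList, List.map_map]
    congr 1
    refine List.map_congr_left ?_
    intro j hjl
    have hjl' := List.mem_range.1 hjl
    show ((Fml.neg GeRaw).subst (ρG j)).subst θ = _
    show Fml.neg ((GeRaw.subst (ρG j)).subst θ) = _
    congr 1
    rw [fml_subst_comp_qf (ρG j) θ GeRaw hqGeRaw]
    refine fml_subst_congr_qf GeRaw hqGeRaw ?_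
    intro y hy
    show ((ρG j) y).subst θ = _
    rw [hρG]
    show θ (Nat.pair (2*j+1) y) = _
    exact hθG j hjl' y hy
  have hqA : A.isQF := fml_isQF_subst θ Fe hqFe
  have hqB : B.isQF := fml_isQF_subst θ Ge hqGe
  -- propositional entailment A ⟹ B
  have hptail : ∀ v : Val, peval v A → peval v B := by
    intro v hvA
    rw [hAeq, peval_conjList] at hvA
    have hall : ∀ σ ∈ Fσs, peval v (FeRaw.subst σ) := by
      intro σ hσ
      obtain ⟨i, him, hieq⟩ := mem_getD hσ cσ
      rw [← hieq]
      exact hvA _ (List.mem_map_of_mem (List.mem_range.2 him))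
    obtain ⟨τ, hτmem, hτnp⟩ := hkey v hall
    obtain ⟨j, hjl', hjeq⟩ := mem_getD hτmem cσ
    rw [hBeq, peval_disjList]
    refine ⟨_, List.mem_map_of_mem (List.mem_range.2 hjl'), ?_⟩
    show ¬ peval v (GeRaw.subst (Gτs.getD j cσ))
    rw [hjeq]
    exact hτnp
  -- the ground interpolant
  set Hg : Fml := interpH A B with hHg
  have hsyn := interp_syntactic A B hqA
  have hAfree : A.free = ∅ := by
    rw [Set.eq_empty_iff_forall_notMem]
    intro z hz
    rw [hA] at hz
    rw [fml_free_subst_qf θ Fe hqFe] at hz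
    obtain ⟨y, hy, hzv⟩ := hz
    rw [hθgate y (Or.inl hy)] at hzv
    rw [(builtFrom_props (dec y) (hdecb y)).1] at hzv
    exact hzv
  -- the symbol sets
  set FS : Set (ℕ × ℕ) := (F.funs \ G.funs) ∪ {q | N ≤ q.1 ∧ q.1 < N'} with hFS
  set GS : Set (ℕ × ℕ) := (G.funs \ F.funs) ∪ {q | N' ≤ q.1} with hGS
  have hcFr : (sk N F true Tm.var [] 0).2 = cF := rfl
  have hcGr : (sk N' (Fml.neg G) true Tm.var [] 0).2 = cG := rfl
  -- (v) : the domain of θ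
  have hdomEq : Subst.dom θ = Fe.free ∪ Ge.free := by
    ext z
    constructor
    · intro hz
      by_contra hnu
      rw [Subst.dom, Set.mem_setOf_eq, hθgate' z hnu] at hz
      exact hz rfl
    · intro hz
      rw [Subst.dom, Set.mem_setOf_eq, hθgate z hz]
      exact (builtFrom_props (dec z) (hdecb z)).2.2 z
  -- condition (i)
  have hcondi : ∀ (D : Type), Nonempty D → ∀ M : Struc D, (∀ a, F.sat M a) →
      ∃ M' : Struc D, agreeExcept M M' FS ∧ ∀ a, Fe.sat M' a := by
    intro D hne M hFsat
    obtain ⟨d₀⟩ := hne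
    obtain ⟨E', hE'ext, P⟩ := sk_sound₁ M d₀ N F true Tm.var [] 0 (fun _ _ _ => d₀) hNF
      (by rw [hFfree]; exact fun y hy => absurd hy (Set.notMem_empty y))
      (by rw [hFfree]; exact fun y hy => absurd hy (Set.notMem_empty y))
    set M' : Struc D := ⟨fun f => if N ≤ f ∧ f < N' then E' f else M.fn f, M.pr⟩ with hM'
    have h2 : ∀ f, f < N → M'.fn f = M.fn f := fun f hf => if_neg (by omega)
    have h3 : ∀ f, N ≤ f → f < N + (sk N F true Tm.var [] 0).2 → M'.fn f = E' f := by
      intro f hf1 hf2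
      exact if_pos ⟨hf1, by omega⟩
    have hfna : ∀ q ∈ F.funs, M.fn q.1 q.2 = M'.fn q.1 q.2 :=
      fun q hq => (congrFun (h2 q.1 (hNF q hq)) q.2).symm
    have hFeRawsat : ∀ a', FeRaw.sat M' a' := by
      intro a'
      have hFM' : F.sat M' a' :=
        (sat_congr (M := M) (M' := M') F rfl hfna (fun _ _ => rfl)).1 (hFsat a')
      exact (P M' rfl h2 h3 a').1 rfl hFM'
    refine ⟨M', ⟨rfl, ?_⟩, ?_⟩
    · intro g n hg
      by_cases hc : N ≤ g ∧ g < N'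
      · exact absurd (Or.inr hc : (g, n) ∈ FS) hg
      · exact congrFun (if_neg hc) n
    · intro a
      rw [hFe, sat_conjList]
      intro ψ hψ
      obtain ⟨i, _, rfl⟩ := List.mem_map.1 hψ
      rw [sat_subst_qf M' (ρF i) FeRaw hqFeRaw]
      exact hFeRawsat _
  -- condition (i')
  have hcondi' : ∀ (D : Type), Nonempty D → ∀ M : Struc D,
      (∀ M' : Struc D, agreeExcept M M' GS → ∃ a, Ge.sat M' a) → ∀ a, G.sat M a := by
    intro D hne M hyp a
    by_contra hnG
    obtain ⟨d₀⟩ := hne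
    have hnegGfree : (Fml.neg G).free = ∅ := hGfree
    obtain ⟨E', hE'ext, P⟩ := sk_sound₁ M d₀ N' (Fml.neg G) true Tm.var [] 0
      (fun _ _ _ => d₀)
      (fun q hq => lt_of_lt_of_le (hNG q hq) (by omega))
      (by rw [hnegGfree]; exact fun y hy => absurd hy (Set.notMem_empty y))
      (by rw [hnegGfree]; exact fun y hy => absurd hy (Set.notMem_empty y))
    set M'' : Struc D := ⟨fun f => if N' ≤ f ∧ f < N' + cG then E' f else M.fn f, M.pr⟩
      with hM''
    have h2 : ∀ f, f < N' → M''.fn f = M.fn f := fun f hf => if_neg (by omega)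
    have h3 : ∀ f, N' ≤ f → f < N' + (sk N' (Fml.neg G) true Tm.var [] 0).2 →
        M''.fn f = E' f := by
      intro f hf1 hf2
      exact if_pos ⟨hf1, by omega⟩
    have hfna : ∀ q ∈ (Fml.neg G).funs, M.fn q.1 q.2 = M''.fn q.1 q.2 :=
      fun q hq => (congrFun (h2 q.1 (lt_of_lt_of_le (hNG q hq) (by omega))) q.2).symm
    have hnGall : ∀ a', (Fml.neg G).sat M'' a' := by
      intro a'
      refine (sat_congr (M := M) (M' := M'') (Fml.neg G) rfl hfna ?_).1 hnG
      rw [hnegGfree]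
      exact fun x hx => absurd hx (Set.notMem_empty x)
    have hGeRawsat : ∀ a', GeRaw.sat M'' a' := by
      intro a'
      exact (P M'' rfl h2 h3 a').1 rfl (hnGall a')
    obtain ⟨a₁, hGeSat⟩ := hyp M'' ⟨rfl, by
      intro g n hg
      by_cases hc : N' ≤ g ∧ g < N' + cG
      · exact absurd (Or.inr (hc.1 : N' ≤ (g, n).1) : (g, n) ∈ GS) hg
      · exact congrFun (if_neg hc) n⟩
    rw [hGe, sat_disjList] at hGeSat
    obtain ⟨ψ, hψ, hsatψ⟩ := hGeSat
    obtain ⟨j, _, rfl⟩ := List.mem_map.1 hψ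
    exact hsatψ ((sat_subst_qf M'' (ρG j) GeRaw hqGeRaw a₁).2 (hGeRawsat _))
  -- assemble everything
  refine ⟨FS, GS, Hg, Fe, Ge, θ, hF, hG, ?_, ?_, hqFe, hqGe, ?_, hcondi, hcondi',
    ?_, ?_, ?_, ?_, ?_, ?_, hdomEq, ?_, ?_⟩
  · -- FS ∩ GS = ∅
    rw [Set.eq_empty_iff_forall_notMem]
    rintro q ⟨hqF, hqG⟩
    have hg' : (q ∈ G.funs ∧ q ∉ F.funs) ∨ N' ≤ q.1 := by
      rcases hqG with h | h
      · exact Or.inl ⟨h.1, h.2⟩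
      · exact Or.inr h
    rcases hqF with ⟨hf1, hf2⟩ | ⟨hf1, hf2⟩
    · rcases hg' with ⟨hg1, hg2⟩ | hg1
      · exact hg2 hf1
      · have := hNF q hf1; omega
    · rcases hg' with ⟨hg1, hg2⟩ | hg1
      · have := hNG q hg1; omega
      · omega
  · -- Hg ground
    refine ⟨hsyn.1, ?_⟩
    have := hsyn.2.2.2
    rw [hAfree] at this
    exact Set.subset_empty_iff.1 this
  · -- θ ground
    intro x hx
    rw [hdomEq] at hx
    rw [Tm.isGround, hθgate x hx]
    exact (builtFrom_props (dec x) (hdecb x)).1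
  · -- (ii)
    intro q hq
    obtain ⟨ψ, hψ, hq'⟩ := conjList_preds hq
    obtain ⟨i, _, rfl⟩ := List.mem_map.1 hψ
    rw [fml_preds_subst (ρF i) FeRaw true] at hq'
    exact sk_preds N F true Tm.var [] 0 true hq'
  · -- (ii')
    intro q hq
    obtain ⟨ψ, hψ, hq'⟩ := disjList_preds hq
    obtain ⟨j, _, rfl⟩ := List.mem_map.1 hψ
    rw [fml_preds_subst (ρG j) (Fml.neg GeRaw) true] at hq'
    have : q ∈ GeRaw.preds false := hq'
    exact sk_preds N' (Fml.neg G) true Tm.var [] 0 false this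
  · -- (iii)
    intro q hq
    obtain ⟨ψ, hψ, hq'⟩ := conjList_funs hq
    obtain ⟨i, _, rfl⟩ := List.mem_map.1 hψ
    rcases (fml_funs_subst_qf (ρF i) FeRaw hqFeRaw).1 hq' with h' | ⟨y, _, hy2⟩
    · rcases hfunsFeRaw q h' with h'' | h''
      · by_cases hqG : q ∈ G.funs
        · exact Or.inl ⟨h'', hqG⟩
        · exact Or.inr (Or.inl ⟨h'', hqG⟩)
      · exact Or.inr (Or.inr h'')
    · exact absurd hy2 (by rw [hρF]; simp [Tm.funs])
  · -- (iii')
    intro q hq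
    obtain ⟨ψ, hψ, hq'⟩ := disjList_funs hq
    obtain ⟨j, _, rfl⟩ := List.mem_map.1 hψ
    rcases (fml_funs_subst_qf (ρG j) (Fml.neg GeRaw) hqGeRaw).1 hq' with h' | ⟨y, _, hy2⟩
    · rcases hfunsGeRaw q h' with h'' | h''
      · by_cases hqF : q ∈ F.funs
        · exact Or.inl ⟨hqF, h''⟩
        · exact Or.inr (Or.inl ⟨h'', hqF⟩)
      · exact Or.inr (Or.inr (by simp only [Set.mem_setOf_eq]; omega))
    · exact absurd hy2 (by rw [hρG]; simp [Tm.funs])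
  · -- (iv)
    rw [Set.eq_empty_iff_forall_notMem]
    rintro q ⟨hqF, hqG⟩
    rcases hqG with ⟨_, hg2⟩ | hg1
    · exact hg2 hqF
    · simp only [Set.mem_setOf_eq] at hg1
      have := hNF q hqF; omega
  · -- (iv')
    rw [Set.eq_empty_iff_forall_notMem]
    rintro q ⟨hqG, hqF⟩
    rcases hqF with ⟨_, hf2⟩ | ⟨hf1, _⟩
    · exact hf2 hqG
    · have := hNG q hqG; omega
  · -- (vi)
    refine ⟨c₀, Or.inr (Or.inr (by simp only [Set.mem_setOf_eq]; omega)), ?_⟩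
    intro x hx
    rw [hdomEq] at hx
    rw [hθgate x hx]
    intro q hq
    have hqSig : q ∈ Sig := (builtFrom_props (dec x) (hdecb x)).2.1 q hq
    rcases hqSig with hq0 | hqFG
    · exact Or.inr hq0
    · rcases hqFG with hqf | hqg
      · refine Or.inl (Or.inl ?_)
        refine conjList_funs_sup (L := (List.range m).map (fun i => FeRaw.subst (ρF i)))
          (List.mem_map_of_mem (List.mem_range.2 hm1)) ?_
        exact (fml_funs_subst_qf (ρF 0) FeRaw hqFeRaw).2 (Or.inl hqf)
      · refine Or.inl (Or.inr ?_)
        refine disjList_funs_sup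
          (L := (List.range l).map (fun j => (Fml.neg GeRaw).subst (ρG j)))
          (List.mem_map_of_mem (List.mem_range.2 hl1)) ?_
        exact (fml_funs_subst_qf (ρG 0) (Fml.neg GeRaw) hqGeRaw).2 (Or.inl hqg)
  · -- (vii)
    refine ⟨?_, ?_, hsyn.2.1, hsyn.2.2.1, ?_⟩
    · intro D hne M a hsat
      rw [sat_eq_peval M a _ hqA] at hsat
      rw [sat_eq_peval M a _ hsyn.1]
      exact interp_sound_left A B _ hsat
    · intro D hne M a hsat
      rw [sat_eq_peval M a _ hsyn.1] at hsat
      rw [sat_eq_peval M a _ hqB]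
      exact interp_sound_right A B hqA hqB hptail _ hsat
    · intro x hx
      exfalso
      have := hsyn.2.2.2 hx
      rw [hAfree] at this
      exact this

end CTIF
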